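/- arXiv:2508.21483 — 6 statements merged into one kernel-verified Lean document; each statement's English description precedes it below -/
import Mathlib

section
/- For all integers 1 ≤ n ≤ N and all N×N complex matrices A and B, the free cumulant precursor K_n^{(N)} is additive over averaged sums of unitary conjugacy orbits: ∫_{U(N)} K_n^{(N)}(A + U B U*) dU = K_n^{(N)}(A) + K_n^{(N)}(B). -/
open MeasureTheory Matrix

/-- The unitary group `U(N)` of `N × N` complex matrices. -/
abbrev UG (N : ℕ) : Type := Matrix.unitaryGroup (Fin N) ℂ

/-- We equip `U(N)` with its Borel σ-algebra. -/
noncomputable instance (N : ℕ) : MeasurableSpace (UG N) := borel _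

instance (N : ℕ) : BorelSpace (UG N) := ⟨rfl⟩

/-- Conjugation `U X U⋆` of a matrix `X` by a unitary matrix `U`. -/
noncomputable def conjU {N : ℕ} (U : UG N) (X : Matrix (Fin N) (Fin N) ℂ) :
    Matrix (Fin N) (Fin N) ℂ :=
  (U : Matrix (Fin N) (Fin N) ℂ) * X * star (U : Matrix (Fin N) (Fin N) ℂ)

/-- The free cumulant precursor
`K_n(X) = N^(n-1) ∫_{U(N)} ∏_{k=0}^{n-1} (U X U⋆)_{k, k+1 mod n} dU` (defined when `n ≤ N`,
junk value `0` otherwise), with respect to a measure `μ` on `U(N)`. -/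
noncomputable def Kcum {N : ℕ} (μ : Measure (UG N)) (n : ℕ)
    (X : Matrix (Fin N) (Fin N) ℂ) : ℂ :=
  if h : n ≤ N then
    (N : ℂ) ^ (n - 1) *
      ∫ U, ∏ k : Fin n,
        conjU U X (Fin.castLE h k) (Fin.castLE h ⟨(k.1 + 1) % n, Nat.mod_lt _ k.pos⟩) ∂μ
  else 0

/-! ### Auxiliary material -/

instance (N : ℕ) : SecondCountableTopology (Matrix (Fin N) (Fin N) ℂ) :=
  (inferInstance : SecondCountableTopology ((Fin N) → (Fin N) → ℂ))

instance (N : ℕ) : SecondCountableTopology (UG N) :=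
  TopologicalSpace.Subtype.secondCountableTopology _

/-- The factor `(U X U⋆)_{k, k+1 mod n}` appearing in the cyclic product. -/
noncomputable def aF {N n : ℕ} [NeZero n] (hn : n ≤ N) (X : Matrix (Fin N) (Fin N) ℂ)
    (U : UG N) (k : Fin n) : ℂ :=
  conjU U X (Fin.castLE hn k) (Fin.castLE hn (k + 1))

lemma cont_conjU_entry {N : ℕ} (X : Matrix (Fin N) (Fin N) ℂ) (i j : Fin N) :
    Continuous fun U : UG N => conjU U X i j := by
  have hc : Continuous fun U : UG N => (U : Matrix (Fin N) (Fin N) ℂ) := continuous_subtype_val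
  have : Continuous fun U : UG N => conjU U X := by
    simp only [conjU, Matrix.star_eq_conjTranspose]
    exact (hc.matrix_mul continuous_const).matrix_mul hc.matrix_conjTranspose
  exact this.matrix_elem i j

lemma norm_conjU_le {N : ℕ} (X : Matrix (Fin N) (Fin N) ℂ) (U : UG N) (i j : Fin N) :
    ‖conjU U X i j‖ ≤ ∑ a : Fin N, ∑ b : Fin N, ‖X a b‖ := by
  have hU : ∀ i j : Fin N, ‖(U : Matrix (Fin N) (Fin N) ℂ) i j‖ ≤ 1 :=
    entry_norm_bound_of_unitary U.2
  have hentry : conjU U X i j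
      = ∑ a : Fin N, ∑ b : Fin N,
        (U : Matrix (Fin N) (Fin N) ℂ) i a * X a b *
          star ((U : Matrix (Fin N) (Fin N) ℂ) j b) := by
    simp only [conjU, Matrix.mul_apply, Matrix.star_apply, Finset.sum_mul]
    rw [Finset.sum_comm]
  rw [hentry]
  refine (norm_sum_le _ _).trans (Finset.sum_le_sum fun a _ => ?_)
  refine (norm_sum_le _ _).trans (Finset.sum_le_sum fun b _ => ?_)
  rw [norm_mul, norm_mul, norm_star]
  calc ‖(U : Matrix (Fin N) (Fin N) ℂ) i a‖ * ‖X a b‖ * ‖(U : Matrix (Fin N) (Fin N) ℂ) j b‖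
      ≤ 1 * ‖X a b‖ * 1 := by
        gcongr
        · exact hU i a
        · exact hU j b
    _ = ‖X a b‖ := by ring

lemma norm_prod_le_pow {ι : Type*} (s : Finset ι) (f : ι → ℂ) (C : ℝ)
    (h : ∀ i ∈ s, ‖f i‖ ≤ C) : ‖∏ i ∈ s, f i‖ ≤ C ^ s.card := by
  rw [norm_prod]
  calc ∏ i ∈ s, ‖f i‖ ≤ ∏ _i ∈ s, C := Finset.prod_le_prod (fun i _ => norm_nonneg _) h
    _ = C ^ s.card := Finset.prod_const C

lemma my_integrable {α : Type*} [MeasurableSpace α] [TopologicalSpace α]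
    [OpensMeasurableSpace α] (μ : Measure α) [IsFiniteMeasure μ] {f : α → ℂ}
    (hf : Continuous f) (C : ℝ) (hC : ∀ x, ‖f x‖ ≤ C) : Integrable f μ :=
  (integrable_const C).mono' hf.aestronglyMeasurable (Filter.Eventually.of_forall hC)

open Fin.NatCast Fin.CommRing in
lemma exists_boundary {n : ℕ} [NeZero n] (T : Finset (Fin n)) (h0 : T.Nonempty)
    (h1 : T ≠ Finset.univ) : ∃ j ∈ T, j - 1 ∉ T := by
  by_contra hc
  push_neg at hc
  obtain ⟨j, hj⟩ := h0
  have key : ∀ m : ℕ, j - (m : Fin n) ∈ T := by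
    intro m
    induction m with
    | zero => simpa using hj
    | succ m ih =>
        have h3 : ((m + 1 : ℕ) : Fin n) = (m : Fin n) + 1 := by push_cast; ring
        rw [h3, ← sub_sub]
        exact hc _ ih
  apply h1
  apply Finset.eq_univ_iff_forall.mpr
  intro c
  have := key ((j - c : Fin n)).val
  rwa [Fin.cast_val_eq_self, sub_sub_cancel] at this

lemma mk_mod_succ {n : ℕ} [NeZero n] (k : Fin n) (h : (k.1 + 1) % n < n) :
    (⟨(k.1 + 1) % n, h⟩ : Fin n) = k + 1 := by
  ext
  simp only [Fin.add_def, Fin.val_one']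
  conv_lhs => rw [Nat.add_mod]
  rw [Nat.mod_eq_of_lt k.isLt]

lemma vanish {N n : ℕ} [NeZero n] (hn : n ≤ N) (μ : Measure (UG N))
    [IsProbabilityMeasure μ] [μ.IsMulLeftInvariant]
    (B : Matrix (Fin N) (Fin N) ℂ) (T : Finset (Fin n)) (hT0 : T.Nonempty)
    (hT1 : T ≠ Finset.univ) :
    ∫ W, ∏ k ∈ T, aF hn B W k ∂μ = 0 := by
  simp only [aF]
  obtain ⟨j, hj, hj'⟩ := exists_boundary T hT0 hT1
  set d : Fin N → ℂ := fun i => if i = Fin.castLE hn j then -1 else 1 with hd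
  have hstar_d : star d = d := by
    funext i
    by_cases h : i = Fin.castLE hn j <;> simp [hd, h]
  have hsd : star (Matrix.diagonal d) = Matrix.diagonal d := by
    rw [Matrix.star_eq_conjTranspose, Matrix.diagonal_conjTranspose, hstar_d]
  have hDmem : Matrix.diagonal d ∈ Matrix.unitaryGroup (Fin N) ℂ := by
    rw [Matrix.mem_unitaryGroup_iff, hsd, Matrix.diagonal_mul_diagonal]
    rw [show (fun i => d i * d i) = fun _ => (1 : ℂ) from
      funext fun i => by by_cases h : i = Fin.castLE hn j <;> simp [hd, h],
      Matrix.diagonal_one]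
  set D : UG N := ⟨Matrix.diagonal d, hDmem⟩ with hD
  have hterm : ∀ (W : UG N) (k : Fin n),
      conjU (D * W) B (Fin.castLE hn k) (Fin.castLE hn (k + 1))
        = d (Fin.castLE hn k) * conjU W B (Fin.castLE hn k) (Fin.castLE hn (k + 1))
            * d (Fin.castLE hn (k + 1)) := by
    intro W k
    have hc : ((D * W : UG N) : Matrix (Fin N) (Fin N) ℂ)
        = Matrix.diagonal d * (W : Matrix (Fin N) (Fin N) ℂ) := rfl
    have hmat : conjU (D * W) B
        = Matrix.diagonal d * conjU W B * Matrix.diagonal d := by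
      simp only [conjU, hc, Matrix.star_mul, hsd, Matrix.mul_assoc]
    rw [hmat, Matrix.mul_diagonal, Matrix.diagonal_mul]
  have key : ∀ W : UG N,
      (∏ k ∈ T, conjU (D * W) B (Fin.castLE hn k) (Fin.castLE hn (k + 1)))
        = - ∏ k ∈ T, conjU W B (Fin.castLE hn k) (Fin.castLE hn (k + 1)) := by
    intro W
    simp only [hterm]
    rw [Finset.prod_mul_distrib, Finset.prod_mul_distrib]
    have h1 : (∏ k ∈ T, d (Fin.castLE hn k)) = -1 := by
      have : ∀ k : Fin n, d (Fin.castLE hn k) = if k = j then (-1 : ℂ) else 1 := by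
        intro k
        simp only [hd]
        congr 1
        simp [Fin.castLE_inj]
      simp only [this]
      rw [Finset.prod_ite_eq' T j (fun _ => (-1 : ℂ)), if_pos hj]
    have h2 : (∏ k ∈ T, d (Fin.castLE hn (k + 1))) = 1 := by
      refine Finset.prod_eq_one fun k hk => ?_
      have hne : k + 1 ≠ j := by
        intro h
        apply hj'
        rw [← h]
        simpa using hk
      simp only [hd]
      rw [if_neg (by simpa [Fin.castLE_inj] using hne)]
    rw [h1, h2]
    ring
  have hinv := MeasureTheory.integral_mul_left_eq_self
    (μ := μ) (fun W => ∏ k ∈ T, conjU W B (Fin.castLE hn k) (Fin.castLE hn (k + 1))) D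
  have h2 : ∫ W, ∏ k ∈ T, conjU W B (Fin.castLE hn k) (Fin.castLE hn (k + 1)) ∂μ
      = - ∫ W, ∏ k ∈ T, conjU W B (Fin.castLE hn k) (Fin.castLE hn (k + 1)) ∂μ := by
    conv_lhs => rw [← hinv]
    simp only [key]
    rw [integral_neg]
  linear_combination h2 / 2

/-- Additivity of the free cumulant precursor `K_n` over averaged sums of
unitary conjugacy orbits: `∫_{U(N)} K_n(A + U B U⋆) dU = K_n(A) + K_n(B)` for `1 ≤ n ≤ N`. -/
theorem statement1 (N n : ℕ) (h1 : 1 ≤ n) (hn : n ≤ N) (haarU : Measure (UG N))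
    [IsProbabilityMeasure haarU] [Measure.IsMulLeftInvariant haarU]
    (A B : Matrix (Fin N) (Fin N) ℂ) :
    (∫ U, Kcum haarU n (A + conjU U B) ∂haarU) =
      Kcum haarU n A + Kcum haarU n B := by
  haveI : NeZero n := ⟨Nat.one_le_iff_ne_zero.mp h1⟩
  set CA : ℝ := ∑ a : Fin N, ∑ b : Fin N, ‖A a b‖ with hCA
  set CB : ℝ := ∑ a : Fin N, ∑ b : Fin N, ‖B a b‖ with hCB
  have hCA0 : 0 ≤ CA := Finset.sum_nonneg fun a _ => Finset.sum_nonneg fun b _ => norm_nonneg _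
  have hCB0 : 0 ≤ CB := Finset.sum_nonneg fun a _ => Finset.sum_nonneg fun b _ => norm_nonneg _
  -- Kcum in terms of `aF`
  have hK : ∀ X : Matrix (Fin N) (Fin N) ℂ,
      Kcum haarU n X = (N : ℂ) ^ (n - 1) * ∫ U, ∏ k : Fin n, aF hn X U k ∂haarU := by
    intro X
    unfold Kcum
    rw [dif_pos hn]
    simp only [mk_mod_succ, aF]
  -- entrywise additivity of conjugation
  have hadd : ∀ (U V : UG N) (k : Fin n),
      aF hn (A + conjU V B) U k = aF hn A U k + aF hn B (U * V) k := by
    intro U V k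
    have hc : ((U * V : UG N) : Matrix (Fin N) (Fin N) ℂ)
        = (U : Matrix (Fin N) (Fin N) ℂ) * (V : Matrix (Fin N) (Fin N) ℂ) := rfl
    have hmat : conjU U (A + conjU V B) = conjU U A + conjU (U * V) B := by
      simp only [conjU, hc, Matrix.star_mul, Matrix.mul_add, Matrix.add_mul, Matrix.mul_assoc]
    simp [aF, hmat, Matrix.add_apply]
  simp only [hK, MeasureTheory.integral_const_mul]
  simp only [hadd]
  -- Fubini
  have hswap : ∫ V, ∫ U, (∏ k : Fin n, (aF hn A U k + aF hn B (U * V) k)) ∂haarU ∂haarU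
      = ∫ U, ∫ V, (∏ k : Fin n, (aF hn A U k + aF hn B (U * V) k)) ∂haarU ∂haarU := by
    apply MeasureTheory.integral_integral_swap
    refine my_integrable _ ?_ ((CA + CB) ^ n) ?_
    · show Continuous fun p : UG N × UG N =>
        ∏ k : Fin n, (aF hn A p.2 k + aF hn B (p.2 * p.1) k)
      simp only [aF]
      apply continuous_finset_prod
      intro k _
      exact (((cont_conjU_entry A _ _).comp continuous_snd).add
        ((cont_conjU_entry B _ _).comp (continuous_snd.mul continuous_fst)))
    · intro p
      have := norm_prod_le_pow Finset.univ
        (fun k : Fin n => aF hn A p.2 k + aF hn B (p.2 * p.1) k) (CA + CB)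
        (fun k _ => (norm_add_le _ _).trans
          (add_le_add (norm_conjU_le A p.2 _ _) (norm_conjU_le B (p.2 * p.1) _ _)))
      simpa [Function.uncurry, Finset.card_univ] using this
  rw [hswap]
  -- substitute W = U * V using left invariance
  have hsub : ∀ U : UG N,
      ∫ V, (∏ k : Fin n, (aF hn A U k + aF hn B (U * V) k)) ∂haarU
        = ∫ W, (∏ k : Fin n, (aF hn A U k + aF hn B W k)) ∂haarU := fun U =>
    MeasureTheory.integral_mul_left_eq_self
      (fun W => ∏ k : Fin n, (aF hn A U k + aF hn B W k)) U
  simp only [hsub]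
  -- expand the product
  have hexp : ∀ (U W : UG N),
      (∏ k : Fin n, (aF hn A U k + aF hn B W k))
        = ∑ S ∈ (Finset.univ : Finset (Fin n)).powerset,
            (∏ k ∈ S, aF hn A U k) * ∏ k ∈ Finset.univ \ S, aF hn B W k := fun U W =>
    Finset.prod_add _ _ _
  simp only [hexp]
  -- pull the sum and constants out of the inner integral
  have hWint : ∀ U : UG N,
      ∫ W, (∑ S ∈ (Finset.univ : Finset (Fin n)).powerset,
          (∏ k ∈ S, aF hn A U k) * ∏ k ∈ Finset.univ \ S, aF hn B W k) ∂haarU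
        = ∑ S ∈ (Finset.univ : Finset (Fin n)).powerset,
            (∏ k ∈ S, aF hn A U k) * ∫ W, (∏ k ∈ Finset.univ \ S, aF hn B W k) ∂haarU := by
    intro U
    rw [MeasureTheory.integral_finset_sum]
    · exact Finset.sum_congr rfl fun S _ => MeasureTheory.integral_const_mul _ _
    · intro S _
      apply MeasureTheory.Integrable.const_mul
      refine my_integrable _ ?_ (CB ^ (Finset.univ \ S).card) ?_
      · simp only [aF]
        exact continuous_finset_prod _ fun k _ => cont_conjU_entry B _ _
      · intro W
        exact norm_prod_le_pow _ _ _ fun k _ => norm_conjU_le B W _ _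
  simp only [hWint]
  -- pull the sum and constants out of the outer integral
  rw [MeasureTheory.integral_finset_sum]
  swap
  · intro S _
    apply MeasureTheory.Integrable.mul_const
    refine my_integrable _ ?_ (CA ^ S.card) ?_
    · simp only [aF]
      exact continuous_finset_prod _ fun k _ => cont_conjU_entry A _ _
    · intro U
      exact norm_prod_le_pow _ _ _ fun k _ => norm_conjU_le A U _ _
  have hterm : ∀ S ∈ (Finset.univ : Finset (Fin n)).powerset,
      (∫ U, ((∏ k ∈ S, aF hn A U k)
          * ∫ W, (∏ k ∈ Finset.univ \ S, aF hn B W k) ∂haarU) ∂haarU)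
        = (∫ U, (∏ k ∈ S, aF hn A U k) ∂haarU)
          * ∫ W, (∏ k ∈ Finset.univ \ S, aF hn B W k) ∂haarU := fun S _ =>
    MeasureTheory.integral_mul_const _ _
  rw [Finset.sum_congr rfl hterm]
  -- only `S = ∅` and `S = univ` contribute
  have hpair : ({∅, Finset.univ} : Finset (Finset (Fin n)))
      ⊆ (Finset.univ : Finset (Fin n)).powerset := by
    intro S hS
    simp [Finset.mem_powerset]
  have hzero : ∀ S ∈ (Finset.univ : Finset (Fin n)).powerset,
      S ∉ ({∅, Finset.univ} : Finset (Finset (Fin n))) →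
      (∫ U, (∏ k ∈ S, aF hn A U k) ∂haarU)
        * (∫ W, (∏ k ∈ Finset.univ \ S, aF hn B W k) ∂haarU) = 0 := by
    intro S _ hS
    simp only [Finset.mem_insert, Finset.mem_singleton] at hS
    push_neg at hS
    obtain ⟨hS0, hS1⟩ := hS
    have hT0 : (Finset.univ \ S).Nonempty := by
      rw [Finset.sdiff_nonempty]
      intro h
      exact hS1 (Finset.eq_univ_iff_forall.mpr fun x => h (Finset.mem_univ x))
    have hT1 : Finset.univ \ S ≠ Finset.univ := by
      intro h
      obtain ⟨x, hx⟩ := hS0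
      have : x ∈ Finset.univ \ S := by rw [h]; exact Finset.mem_univ x
      exact (Finset.mem_sdiff.mp this).2 hx
    rw [vanish hn haarU B _ hT0 hT1, mul_zero]
  rw [← Finset.sum_subset hpair hzero, Finset.sum_pair
    (Ne.symm (Finset.univ_nonempty.ne_empty))]
  have e1 : (∫ U, (∏ k ∈ (∅ : Finset (Fin n)), aF hn A U k) ∂haarU) = 1 := by
    simp [Finset.prod_empty]
  have e2 : (∫ W, (∏ k ∈ Finset.univ \ (Finset.univ : Finset (Fin n)), aF hn B W k) ∂haarU)
      = 1 := by
    simp [Finset.sdiff_self, Finset.prod_empty]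
  rw [Finset.sdiff_empty, e1, e2, one_mul, mul_one]
  ring
end

section
/- Let 1 ≤ n ≤ N, let A be an N×N complex matrix and let σ be a permutation of {0,…,n−1}. For an injective map i : {0,…,n−1} → {0,…,N−1} set I(σ, i) := ∫_{U(N)} ∏_{k=0}^{n−1} (U A U*)_{i(k), i(σ(k))} dU. Then: (i) I(σ, i) = I(σ, j) for any two injective maps i, j (the integral does not depend on the choice of distinct indices); and (ii) I(σ, i) = I(ρ σ ρ⁻¹, i) for every permutation ρ of {0,…,n−1} (the integral depends on σ only through its conjugacy class, i.e., its cycle type). -/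
open MeasureTheory Matrix

/-- `I(σ, i) = ∫_{U(N)} ∏_{k} (U A U⋆)_{i(k), i(σ(k))} dU`. -/
noncomputable def cyclicIntegral {N n : ℕ} (μ : Measure (UG N))
    (A : Matrix (Fin N) (Fin N) ℂ) (σ : Equiv.Perm (Fin n)) (i : Fin n → Fin N) : ℂ :=
  ∫ U, ∏ k : Fin n, conjU U A (i k) (i (σ k)) ∂μ

lemma star_permMatrix {N : ℕ} (π : Equiv.Perm (Fin N)) :
    star (π.permMatrix ℂ) = (π⁻¹.permMatrix ℂ) := by
  ext a b
  simp [Equiv.Perm.permMatrix, PEquiv.toMatrix_apply, Equiv.toPEquiv_apply,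
    Matrix.star_apply, apply_ite (starRingEnd ℂ), eq_comm, Equiv.eq_symm_apply,
    Equiv.Perm.inv_def]

lemma permMatrix_mem_unitary {N : ℕ} (π : Equiv.Perm (Fin N)) :
    (π.permMatrix ℂ) ∈ Matrix.unitaryGroup (Fin N) ℂ := by
  rw [Matrix.mem_unitaryGroup_iff, star_permMatrix]
  rw [Equiv.Perm.permMatrix, Equiv.Perm.permMatrix, ← PEquiv.toMatrix_trans,
    ← Equiv.toPEquiv_trans]
  have h : π.trans π⁻¹ = Equiv.refl (Fin N) := by ext x; simp
  rw [h, Equiv.toPEquiv_refl, PEquiv.toMatrix_refl]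

/-- The permutation matrix of `π` as an element of the unitary group. -/
noncomputable def permUG {N : ℕ} (π : Equiv.Perm (Fin N)) : UG N :=
  ⟨π.permMatrix ℂ, permMatrix_mem_unitary π⟩

lemma conjU_permUG_mul {N : ℕ} (π : Equiv.Perm (Fin N)) (U : UG N)
    (X : Matrix (Fin N) (Fin N) ℂ) (a b : Fin N) :
    conjU (permUG π * U) X a b = conjU U X (π a) (π b) := by
  have hco : ((permUG π * U : UG N) : Matrix (Fin N) (Fin N) ℂ)
      = π.permMatrix ℂ * (U : Matrix (Fin N) (Fin N) ℂ) := rfl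
  have h : conjU (permUG π * U) X
      = π.permMatrix ℂ * conjU U X * star (π.permMatrix ℂ) := by
    unfold conjU
    rw [hco, StarMul.star_mul]
    simp only [mul_assoc]
  rw [h, star_permMatrix]
  rw [Equiv.Perm.permMatrix, Equiv.Perm.permMatrix, PEquiv.toMatrix_toPEquiv_mul,
    PEquiv.mul_toMatrix_toPEquiv]
  simp [Equiv.Perm.inv_def]

lemma cyclicIntegral_comp_perm {N n : ℕ} (μ : Measure (UG N))
    [Measure.IsMulLeftInvariant μ]
    (A : Matrix (Fin N) (Fin N) ℂ) (σ : Equiv.Perm (Fin n)) (i : Fin n → Fin N)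
    (π : Equiv.Perm (Fin N)) :
    cyclicIntegral μ A σ (fun k => π (i k)) = cyclicIntegral μ A σ i := by
  unfold cyclicIntegral
  have h2 : (fun U : UG N => ∏ k : Fin n, conjU U A (π (i k)) (π (i (σ k))))
      = fun U : UG N =>
        (fun V : UG N => ∏ k : Fin n, conjU V A (i k) (i (σ k))) (permUG π * U) := by
    funext U
    exact (Finset.prod_congr rfl fun k _ =>
      (conjU_permUG_mul π U A (i k) (i (σ k)))).symm
  show (∫ U, ∏ k : Fin n, conjU U A (π (i k)) (π (i (σ k))) ∂μ) = _
  rw [h2]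
  exact MeasureTheory.integral_mul_left_eq_self
    (fun V : UG N => ∏ k : Fin n, conjU V A (i k) (i (σ k))) (permUG π)

lemma cyclicIntegral_index_indep {N n : ℕ} (μ : Measure (UG N))
    [Measure.IsMulLeftInvariant μ]
    (A : Matrix (Fin N) (Fin N) ℂ) (σ : Equiv.Perm (Fin n)) (i j : Fin n → Fin N)
    (hi : Function.Injective i) (hj : Function.Injective j) :
    cyclicIntegral μ A σ i = cyclicIntegral μ A σ j := by
  classical
  let e : {x // x ∈ Set.range i} ≃ {x // x ∈ Set.range j} :=
    (Equiv.ofInjective i hi).symm.trans (Equiv.ofInjective j hj)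
  let π : Equiv.Perm (Fin N) := e.extendSubtype
  have hπ : ∀ k, π (i k) = j k := by
    intro k
    have hm : i k ∈ Set.range i := ⟨k, rfl⟩
    rw [Equiv.extendSubtype_apply_of_mem e (i k) hm]
    show ((e ⟨i k, hm⟩ : {x // x ∈ Set.range j}) : Fin N) = j k
    have h1 : (Equiv.ofInjective i hi).symm ⟨i k, hm⟩ = k := by
      rw [Equiv.symm_apply_eq, Equiv.ofInjective_apply]
    simp only [e, Equiv.trans_apply, h1, Equiv.ofInjective_apply]
  have hji : (fun k => π (i k)) = j := funext hπ
  rw [← hji, cyclicIntegral_comp_perm]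

lemma cyclicIntegral_conj {N n : ℕ} (μ : Measure (UG N))
    (A : Matrix (Fin N) (Fin N) ℂ) (σ : Equiv.Perm (Fin n)) (i : Fin n → Fin N)
    (ρ : Equiv.Perm (Fin n)) :
    cyclicIntegral μ A (ρ * σ * ρ⁻¹) i = cyclicIntegral μ A σ (fun k => i (ρ k)) := by
  unfold cyclicIntegral
  congr 1
  funext U
  rw [← Equiv.prod_comp ρ (fun k => conjU U A (i k) (i ((ρ * σ * ρ⁻¹) k)))]
  refine Finset.prod_congr rfl fun k _ => ?_
  simp [Equiv.Perm.mul_apply]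

/-- The integral `I(σ, i)` (i) does not depend on the choice of the
injective index map `i`, and (ii) depends on `σ` only through its conjugacy class. -/
theorem statement2 (N n : ℕ) (h1 : 1 ≤ n) (hn : n ≤ N) (haarU : Measure (UG N))
    [IsProbabilityMeasure haarU] [Measure.IsMulLeftInvariant haarU]
    (A : Matrix (Fin N) (Fin N) ℂ) (σ : Equiv.Perm (Fin n))
    (i j : Fin n → Fin N) (hi : Function.Injective i) (hj : Function.Injective j) :
    cyclicIntegral haarU A σ i = cyclicIntegral haarU A σ j ∧
      ∀ ρ : Equiv.Perm (Fin n),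
        cyclicIntegral haarU A σ i = cyclicIntegral haarU A (ρ * σ * ρ⁻¹) i := by
  refine ⟨cyclicIntegral_index_indep haarU A σ i j hi hj, fun ρ => ?_⟩
  rw [cyclicIntegral_conj]
  exact (cyclicIntegral_index_indep haarU A σ (fun k => i (ρ k)) i
    (hi.comp ρ.injective) hi).symm
end

section
/- Let n ≥ 1, let g ≥ 0 be an integer, let α and β be partitions of n with r := 2g − 2 + ℓ(α) + ℓ(β) ≥ 0, and fix any σ_β ∈ Cl_β. Then the strictly monotone double Hurwitz number satisfies H_g^{•,<}(α, β) = |Cl_β| · #{σ ∈ Cl_α : n + 2 − ℓ(α) − ℓ(β) − ℓ([σ⁻¹ σ_β]) = 2g}; in particular H_g^{•,<}(α, β) is divisible by |Cl_β|. -/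
open Matrix

/-- The cycle type of a permutation, counting each fixed point as a cycle of length 1. -/
def fullCycleType {n : ℕ} (σ : Equiv.Perm (Fin n)) : Multiset ℕ :=
  σ.cycleType + Multiset.replicate (n - σ.cycleType.sum) 1

/-- Number of cycles of a permutation, counting fixed points as 1-cycles. -/
def numCycles {n : ℕ} (σ : Equiv.Perm (Fin n)) : ℕ := (fullCycleType σ).card

/-- A tuple of transpositions `τ_i = (a_i b_i)`, `a_i < b_i`, with `b_1 < b_2 < ⋯` strictly
increasing. -/
def IsStrictMonFactor {n r : ℕ} (t : Fin r → Equiv.Perm (Fin n)) : Prop :=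
  ∃ a b : Fin r → Fin n, (∀ i, a i < b i ∧ t i = Equiv.swap (a i) (b i)) ∧ StrictMono b

/-- A tuple of transpositions `τ_i = (a_i b_i)`, `a_i < b_i`, with `b_1 ≤ b_2 ≤ ⋯` weakly
increasing. -/
def IsWeakMonFactor {n r : ℕ} (t : Fin r → Equiv.Perm (Fin n)) : Prop :=
  ∃ a b : Fin r → Fin n, (∀ i, a i < b i ∧ t i = Equiv.swap (a i) (b i)) ∧ Monotone b

/-- The disconnected strictly monotone double Hurwitz number: the number of tuples
`(σ_α, σ_β, τ_1, …, τ_r)` with `σ_α σ_β τ_1 ⋯ τ_r = 1`, `σ_α` of cycle type `α`, `σ_β` of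
cycle type `β`, and the `τ_i` transpositions with strictly increasing larger moved points. -/
noncomputable def Hstrict (n r : ℕ) (α β : Nat.Partition n) : ℕ :=
  Nat.card {t : Equiv.Perm (Fin n) × Equiv.Perm (Fin n) × (Fin r → Equiv.Perm (Fin n)) //
    t.1 * t.2.1 * (List.ofFn t.2.2).prod = 1 ∧
    fullCycleType t.1 = α.parts ∧ fullCycleType t.2.1 = β.parts ∧
    IsStrictMonFactor t.2.2}

/-- The disconnected weakly monotone double Hurwitz number. -/
noncomputable def Hweak (n r : ℕ) (α β : Nat.Partition n) : ℕ :=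
  Nat.card {t : Equiv.Perm (Fin n) × Equiv.Perm (Fin n) × (Fin r → Equiv.Perm (Fin n)) //
    t.1 * t.2.1 * (List.ofFn t.2.2).prod = 1 ∧
    fullCycleType t.1 = α.parts ∧ fullCycleType t.2.1 = β.parts ∧
    IsWeakMonFactor t.2.2}



lemma support_card_le {n : ℕ} (σ : Equiv.Perm (Fin n)) : σ.support.card ≤ n := by
  simpa using Finset.card_le_univ σ.support

lemma numCycles_def {n : ℕ} (σ : Equiv.Perm (Fin n)) :
    numCycles σ = Multiset.card σ.cycleType + (n - σ.support.card) := by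
  simp [numCycles, fullCycleType, Equiv.Perm.sum_cycleType]

lemma numCycles_eq_iff {n : ℕ} (σ : Equiv.Perm (Fin n)) :
    numCycles σ = n ↔ σ = 1 := by
  constructor
  · intro h
    rw [numCycles_def] at h
    have h1 : σ.support.card ≤ n := support_card_le σ
    have h2 : Multiset.card σ.cycleType • 2 ≤ σ.cycleType.sum :=
      Multiset.card_nsmul_le_sum fun x hx => Equiv.Perm.two_le_of_mem_cycleType hx
    rw [Equiv.Perm.sum_cycleType] at h2
    simp only [smul_eq_mul] at h2
    have : Multiset.card σ.cycleType = 0 := by omega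
    exact Equiv.Perm.card_cycleType_eq_zero.mp this
  · rintro rfl
    simp [numCycles_def]

lemma numCycles_conj {n : ℕ} (σ c : Equiv.Perm (Fin n)) :
    numCycles (c * σ * c⁻¹) = numCycles σ := by
  rw [numCycles_def, numCycles_def, Equiv.Perm.cycleType_conj]
  congr 2
  have : (c * σ * c⁻¹).cycleType.sum = σ.cycleType.sum := by
    rw [Equiv.Perm.cycleType_conj]
  rw [Equiv.Perm.sum_cycleType, Equiv.Perm.sum_cycleType] at this
  rw [this]

lemma numCycles_inv {n : ℕ} (σ : Equiv.Perm (Fin n)) : numCycles σ⁻¹ = numCycles σ := by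
  rw [numCycles_def, numCycles_def, Equiv.Perm.cycleType_inv, Equiv.Perm.support_inv]

lemma fullCycleType_conj {n : ℕ} (σ c : Equiv.Perm (Fin n)) :
    fullCycleType (c * σ * c⁻¹) = fullCycleType σ := by
  unfold fullCycleType
  rw [Equiv.Perm.cycleType_conj]

lemma fullCycleType_inv {n : ℕ} (σ : Equiv.Perm (Fin n)) :
    fullCycleType σ⁻¹ = fullCycleType σ := by
  unfold fullCycleType
  rw [Equiv.Perm.cycleType_inv]

lemma cycleType_eq_of_fullCycleType_eq {n : ℕ} {σ τ : Equiv.Perm (Fin n)}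
    (h : fullCycleType σ = fullCycleType τ) : σ.cycleType = τ.cycleType := by
  have key : ∀ ρ : Equiv.Perm (Fin n), (fullCycleType ρ).filter (2 ≤ ·) = ρ.cycleType := by
    intro ρ
    unfold fullCycleType
    rw [Multiset.filter_add, Multiset.filter_eq_self.mpr
      (fun x hx => Equiv.Perm.two_le_of_mem_cycleType hx),
      Multiset.filter_eq_nil.mpr (by intro a ha; rw [Multiset.eq_of_mem_replicate ha]; norm_num),
      add_zero]
  rw [← key σ, ← key τ, h]

open Equiv in
lemma numCycles_swap_mul {n : ℕ} (f : Equiv.Perm (Fin n)) (x : Fin n) (hx : f x ≠ x) :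
    numCycles (Equiv.swap x (f x) * f) = numCycles f + 1 := by
  classical
  set c := f.cycleOf x with hc
  have hcmem : c ∈ f.cycleFactorsFinset := Equiv.Perm.cycleOf_mem_cycleFactorsFinset_iff.mpr (Equiv.Perm.mem_support.mpr hx)
  have hdisj : Equiv.Perm.Disjoint (f * c⁻¹) c :=
    Equiv.Perm.disjoint_mul_inv_of_mem_cycleFactorsFinset hcmem
  set d := f * c⁻¹ with hd
  have hf : f = d * c := by rw [hd]; group
  have hcx : c x = f x := Equiv.Perm.cycleOf_apply_self f x
  have hcxne : c x ≠ x := by rw [hcx]; exact hx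
  have hcIsCycle : c.IsCycle := Equiv.Perm.isCycle_cycleOf f hx
  have hccx : c (c x) = f (f x) := by rw [hcx]; exact Equiv.Perm.cycleOf_apply_apply_self f x
  have hcomm : Commute d c := hdisj.commute
  have key : Equiv.swap x (f x) * f = (Equiv.swap x (c x) * c) * d := by
    rw [← hcx, mul_assoc]
    congr 1
    rw [hf, hcomm.eq]
  have hxc : x ∈ c.support := Equiv.Perm.mem_support.mpr hcxne
  have hsupf : f.support = d.support ∪ c.support := by
    rw [hf]; exact hdisj.support_mul
  have hdisjsup : _root_.Disjoint d.support c.support :=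
    Equiv.Perm.disjoint_iff_disjoint_support.mp hdisj
  have hcardf : f.support.card = d.support.card + c.support.card := by
    rw [hsupf, Finset.card_union_of_disjoint hdisjsup]
  have hctf : f.cycleType = d.cycleType + c.cycleType := by
    rw [hf]; exact hdisj.cycleType_mul
  have hctc : c.cycleType = {c.support.card} := hcIsCycle.cycleType
  by_cases h2 : f (f x) = x
  · -- c is a transposition
    have hcswap : c = Equiv.swap x (c x) :=
      hcIsCycle.eq_swap_of_apply_apply_eq_self hcxne (by rw [hccx]; exact h2)
    have hswapc : Equiv.swap x (c x) * c = 1 := by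
      nth_rewrite 2 [hcswap]
      exact Equiv.swap_mul_self _ _
    have hkey2 : Equiv.swap x (f x) * f = d := by
      rw [key, hswapc, one_mul]
    have hsupc : c.support.card = 2 := by
      conv_lhs => rw [hcswap]
      exact Equiv.Perm.card_support_swap hcxne.symm
    rw [hkey2, numCycles_def, numCycles_def, hctf, hctc]
    have := support_card_le f
    simp only [Multiset.card_add, Multiset.card_singleton]
    omega
  · have hc2 : c (c x) ≠ x := by rw [hccx]; exact h2
    set c' := Equiv.swap x (c x) * c with hc'
    have hc'cyc : c'.IsCycle := hcIsCycle.swap_mul hcxne hc2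
    have hsup' : c'.support = c.support \ {x} := Equiv.Perm.support_swap_mul_eq c x hc2
    have hdisj' : Equiv.Perm.Disjoint c' d := by
      rw [Equiv.Perm.disjoint_iff_disjoint_support]
      refine Finset.disjoint_of_subset_left ?_ hdisjsup.symm
      rw [hsup']; exact Finset.sdiff_subset
    have hcard' : c'.support.card = c.support.card - 1 := by
      rw [hsup', Finset.card_sdiff_of_subset (Finset.singleton_subset_iff.mpr hxc)]
      simp
    have hct' : (Equiv.swap x (f x) * f).cycleType = c'.cycleType + d.cycleType := by
      rw [key]
      exact hdisj'.cycleType_mul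
    have hsupnew : (Equiv.swap x (f x) * f).support = c'.support ∪ d.support := by
      rw [key]
      exact hdisj'.support_mul
    have hcardnew : (Equiv.swap x (f x) * f).support.card = c'.support.card + d.support.card := by
      rw [hsupnew, Finset.card_union_of_disjoint (Equiv.Perm.disjoint_iff_disjoint_support.mp hdisj')]
    have hc'ct : c'.cycleType = {c'.support.card} := hc'cyc.cycleType
    have hcpos : 1 ≤ c.support.card := Finset.card_pos.mpr ⟨x, hxc⟩
    have := support_card_le f
    rw [numCycles_def, numCycles_def, hct', hctf, hctc, hc'ct, hcardnew, hcard', hcardf]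
    simp only [Multiset.card_add, Multiset.card_singleton]
    omega


lemma prod_fix {n : ℕ} {M : Fin n} :
    ∀ {l : List (Equiv.Perm (Fin n))}, (∀ g ∈ l, g M = M) → l.prod M = M := by
  intro l
  induction l with
  | nil => simp
  | cons g l ih =>
    intro h
    simp only [List.prod_cons, Equiv.Perm.mul_apply]
    rw [ih (fun g' hg' => h g' (List.mem_cons_of_mem _ hg')), h g List.mem_cons_self]

lemma prod_lt {n : ℕ} {K : Fin n} :
    ∀ {l : List (Equiv.Perm (Fin n))}, (∀ g ∈ l, ∀ x, x < K → g x < K) →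
      ∀ x, x < K → l.prod x < K := by
  intro l
  induction l with
  | nil => intro _ x hx; simpa using hx
  | cons g l ih =>
    intro h x hx
    simp only [List.prod_cons, Equiv.Perm.mul_apply]
    exact h g List.mem_cons_self _ (ih (fun g' hg' => h g' (List.mem_cons_of_mem _ hg')) x hx)

lemma swap_fix {n : ℕ} {a b x : Fin n} (h1 : a < b) (h2 : b < x) : Equiv.swap a b x = x :=
  Equiv.swap_apply_of_ne_of_ne (ne_of_gt (h1.trans h2)) (ne_of_gt h2)

lemma swap_lt {n : ℕ} {a b K x : Fin n} (h1 : a < b) (h2 : b < K) (hx : x < K) :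
    Equiv.swap a b x < K := by
  rcases eq_or_ne x a with rfl | hxa
  · rw [Equiv.swap_apply_left]; exact h2
  rcases eq_or_ne x b with rfl | hxb
  · rw [Equiv.swap_apply_right]; exact h1.trans h2
  · rw [Equiv.swap_apply_of_ne_of_ne hxa hxb]; exact hx

lemma factor_fixes {n r : ℕ} {t : Fin r → Equiv.Perm (Fin n)} {a b : Fin r → Fin n}
    (hab : ∀ i, a i < b i ∧ t i = Equiv.swap (a i) (b i)) {x : Fin n} (hx : ∀ i, b i < x) :
    (List.ofFn t).prod x = x := by
  apply prod_fix
  intro g hg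
  obtain ⟨i, rfl⟩ : ∃ i, t i = g := by simpa [List.mem_ofFn] using hg
  rw [(hab i).2]
  exact swap_fix (hab i).1 (hx i)

lemma factor_lt {n r : ℕ} {t : Fin r → Equiv.Perm (Fin n)} {a b : Fin r → Fin n}
    (hab : ∀ i, a i < b i ∧ t i = Equiv.swap (a i) (b i)) {K : Fin n} (hK : ∀ i, b i < K) :
    ∀ x, x < K → (List.ofFn t).prod x < K := by
  apply prod_lt
  intro g hg
  obtain ⟨i, rfl⟩ : ∃ i, t i = g := by simpa [List.mem_ofFn] using hg
  intro x hx
  rw [(hab i).2]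
  exact swap_lt (hab i).1 (hK i) hx

lemma ofFn_prod_succ {n r : ℕ} (t : Fin (r+1) → Equiv.Perm (Fin n)) :
    (List.ofFn t).prod = (List.ofFn fun i : Fin r => t i.castSucc).prod * t (Fin.last r) := by
  rw [List.ofFn_succ' t, List.concat_eq_append, List.prod_append, List.prod_cons, List.prod_nil,
    mul_one]

lemma prod_top_lt {n r : ℕ} (t : Fin (r+1) → Equiv.Perm (Fin n)) (a b : Fin (r+1) → Fin n)
    (hab : ∀ i, a i < b i ∧ t i = Equiv.swap (a i) (b i)) (hb : StrictMono b) :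
    (List.ofFn t).prod (b (Fin.last r)) < b (Fin.last r) := by
  rw [ofFn_prod_succ, Equiv.Perm.mul_apply, (hab (Fin.last r)).2, Equiv.swap_apply_right]
  exact factor_lt (fun i => hab i.castSucc) (fun i => hb (Fin.castSucc_lt_last i)) _
    ((hab (Fin.last r)).1)

lemma bound_of_prod_fix {n r : ℕ} {ρ : Equiv.Perm (Fin n)} {s : Fin r → Equiv.Perm (Fin n)}
    (hs : (List.ofFn s).prod = ρ) (a b : Fin r → Fin n)
    (hab : ∀ i, a i < b i ∧ s i = Equiv.swap (a i) (b i)) (hb : StrictMono b) {M : Fin n}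
    (hfix : ∀ x, M ≤ x → ρ x = x) : ∀ i, b i < M := by
  cases r with
  | zero => exact fun i => i.elim0
  | succ k =>
    intro i
    have htop := prod_top_lt s a b hab hb
    rw [hs] at htop
    by_contra hle
    push_neg at hle
    have h1 : M ≤ b (Fin.last k) := le_trans hle (hb.monotone (Fin.le_last i))
    rw [hfix _ h1] at htop
    exact lt_irrefl _ htop

lemma factorCount {n : ℕ} : ∀ (r : ℕ) (π : Equiv.Perm (Fin n)),
    Nat.card {t : Fin r → Equiv.Perm (Fin n) //
      (List.ofFn t).prod = π ∧ IsStrictMonFactor t} =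
    if n = numCycles π + r then 1 else 0 := by
  intro r
  induction r with
  | zero =>
    intro π
    by_cases hπ : π = 1
    · subst hπ
      rw [if_pos (by rw [(numCycles_eq_iff (1 : Equiv.Perm (Fin n))).mpr rfl, Nat.add_zero])]
      rw [Nat.card_eq_one_iff_unique]
      refine ⟨⟨fun t s => Subtype.ext (funext fun i => i.elim0)⟩, ⟨⟨Fin.elim0, by simp,
        Fin.elim0, Fin.elim0, fun i => i.elim0, by intro i j h; exact i.elim0⟩⟩⟩
    · rw [if_neg (fun h => hπ ((numCycles_eq_iff π).mp (by omega))), Nat.card_eq_zero]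
      left
      constructor
      rintro ⟨t, hprod, -⟩
      exact hπ (by simpa using hprod.symm)
  | succ r ih =>
    intro π
    by_cases hπ : π = 1
    · subst hπ
      have hn1 : numCycles (1 : Equiv.Perm (Fin n)) = n := (numCycles_eq_iff 1).mpr rfl
      rw [if_neg (by omega), Nat.card_eq_zero]
      left
      constructor
      rintro ⟨t, hprod, a, b, hab, hb⟩
      have htop := prod_top_lt t a b hab hb
      rw [hprod] at htop
      simp at htop
    · have hsupne : π.support.Nonempty :=
        Finset.nonempty_iff_ne_empty.mpr (fun h => hπ (Equiv.Perm.support_eq_empty_iff.mp h))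
      set M := π.support.max' hsupne with hM
      have hMmem : M ∈ π.support := π.support.max'_mem hsupne
      have hMne : π M ≠ M := Equiv.Perm.mem_support.mp hMmem
      have hMtop : ∀ x, M < x → π x = x := by
        intro x hx
        by_contra hc
        exact absurd (π.support.le_max' x (Equiv.Perm.mem_support.mpr hc)) (not_le.mpr hx)
      set a₀ := π⁻¹ M with ha₀
      have ha₀M : π a₀ = M := π.apply_symm_apply M
      have ha₀ne : a₀ ≠ M := by
        intro h
        rw [h] at ha₀M
        exact hMne ha₀M
      have ha₀mem : a₀ ∈ π.support :=
        Equiv.Perm.mem_support.mpr (by rw [ha₀M]; exact Ne.symm ha₀ne)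
      have ha₀lt : a₀ < M := lt_of_le_of_ne (π.support.le_max' a₀ ha₀mem) ha₀ne
      set ρ := π * Equiv.swap a₀ M with hρ
      have hρfix : ∀ x, M ≤ x → ρ x = x := by
        intro x hx
        rcases eq_or_lt_of_le hx with rfl | hlt
        · rw [hρ]
          simp only [Equiv.Perm.mul_apply, Equiv.swap_apply_right]
          exact ha₀M
        · rw [hρ]
          simp only [Equiv.Perm.mul_apply]
          rw [Equiv.swap_apply_of_ne_of_ne (ne_of_gt (ha₀lt.trans hlt)) (ne_of_gt hlt)]
          exact hMtop x hlt
      have hnum : numCycles ρ = numCycles π + 1 := by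
        have hkey : ρ = Equiv.swap M (π M) * π := by
          have h1 := Equiv.swap_apply_apply π a₀ M
          rw [ha₀M] at h1
          rw [hρ, h1]
          group
        rw [hkey]
        exact numCycles_swap_mul π M hMne
      have hcardeq :
          Nat.card {s : Fin r → Equiv.Perm (Fin n) //
            (List.ofFn s).prod = ρ ∧ IsStrictMonFactor s} =
          Nat.card {t : Fin (r+1) → Equiv.Perm (Fin n) //
            (List.ofFn t).prod = π ∧ IsStrictMonFactor t} := by
        apply Nat.card_eq_of_bijective
          (fun s => ⟨Fin.snoc s.1 (Equiv.swap a₀ M), by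
            obtain ⟨hsprod, a, b, hab, hb⟩ := s.2
            have hbM : ∀ i, b i < M := bound_of_prod_fix hsprod a b hab hb hρfix
            constructor
            · rw [ofFn_prod_succ]
              simp only [Fin.snoc_castSucc, Fin.snoc_last]
              rw [hsprod, hρ, mul_assoc, Equiv.swap_mul_self, mul_one]
            · refine ⟨Fin.snoc a a₀, Fin.snoc b M, ?_, ?_⟩
              · intro i
                rcases Fin.eq_castSucc_or_eq_last i with ⟨j, rfl⟩ | rfl
                · simpa using hab j
                · simp [ha₀lt]
              · intro i j hij
                rcases Fin.eq_castSucc_or_eq_last j with ⟨j', rfl⟩ | rfl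
                · rcases Fin.eq_castSucc_or_eq_last i with ⟨i', rfl⟩ | rfl
                  · simp only [Fin.snoc_castSucc]
                    exact hb (Fin.castSucc_lt_castSucc_iff.mp hij)
                  · exact absurd hij (not_lt.mpr (Fin.castSucc_lt_last j').le)
                · rcases Fin.eq_castSucc_or_eq_last i with ⟨i', rfl⟩ | rfl
                  · simp only [Fin.snoc_castSucc, Fin.snoc_last]
                    exact hbM i'
                  · exact absurd hij (lt_irrefl _)⟩)
        constructor
        · rintro ⟨s, hs⟩ ⟨s', hs'⟩ h
          have h' : (Fin.snoc s (Equiv.swap a₀ M) : Fin (r+1) → Equiv.Perm (Fin n)) =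
              Fin.snoc s' (Equiv.swap a₀ M) := Subtype.ext_iff.mp h
          apply Subtype.ext
          funext i
          have := congrFun h' i.castSucc
          simpa using this
        · rintro ⟨t, hprod, a, b, hab, hb⟩
          have htop := prod_top_lt t a b hab hb
          rw [hprod] at htop
          have hblastM : b (Fin.last r) = M := by
            have h1 : b (Fin.last r) ≤ M :=
              π.support.le_max' _ (Equiv.Perm.mem_support.mpr (ne_of_lt htop))
            rcases lt_or_eq_of_le h1 with hlt | heq
            · exfalso
              apply hMne
              rw [← hprod]
              exact factor_fixes hab (fun i => lt_of_le_of_lt (hb.monotone (Fin.le_last i)) hlt)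
            · exact heq
          have hinitfix : (List.ofFn fun i : Fin r => t i.castSucc).prod M = M := by
            apply factor_fixes (fun i => hab i.castSucc)
            intro i
            rw [← hblastM]
            exact hb (Fin.castSucc_lt_last i)
          have hsplit : π = (List.ofFn fun i : Fin r => t i.castSucc).prod * t (Fin.last r) := by
            rw [← hprod, ofFn_prod_succ]
          have halast : a (Fin.last r) = a₀ := by
            have h2 : π (a (Fin.last r)) = M := by
              rw [hsplit]
              simp only [Equiv.Perm.mul_apply]
              rw [(hab (Fin.last r)).2, hblastM, Equiv.swap_apply_left]
              exact hinitfix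
            rw [ha₀, ← h2]
            exact (π.symm_apply_apply _).symm
          have htlast : t (Fin.last r) = Equiv.swap a₀ M := by
            rw [(hab (Fin.last r)).2, halast, hblastM]
          have hinitprod : (List.ofFn fun i : Fin r => t i.castSucc).prod = ρ := by
            have h3 := hsplit
            rw [htlast] at h3
            rw [hρ, h3, mul_assoc, Equiv.swap_mul_self, mul_one]
          refine ⟨⟨fun i => t i.castSucc, hinitprod, fun i => a i.castSucc, fun i => b i.castSucc,
            fun i => hab i.castSucc, fun i j hij => hb (Fin.castSucc_lt_castSucc_iff.mpr hij)⟩, ?_⟩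
          apply Subtype.ext
          funext i
          rcases Fin.eq_castSucc_or_eq_last i with ⟨j, rfl⟩ | rfl
          · simp
          · simp [htlast]
      rw [← hcardeq, ih ρ, hnum]
      by_cases hcond : n = numCycles π + (r+1)
      · rw [if_pos (by omega), if_pos hcond]
      · rw [if_neg (by omega), if_neg hcond]

lemma factor_empty {n r : ℕ} {π : Equiv.Perm (Fin n)} (h : ¬ n = numCycles π + r) :
    IsEmpty {t : Fin r → Equiv.Perm (Fin n) //
      (List.ofFn t).prod = π ∧ IsStrictMonFactor t} := by
  have hc := factorCount r π
  rw [if_neg h] at hc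
  rcases Nat.card_eq_zero.mp hc with h' | h'
  · exact h'
  · exact absurd h' (not_infinite_iff_finite.mpr inferInstance)

lemma factor_unique {n r : ℕ} {π : Equiv.Perm (Fin n)} (h : n = numCycles π + r) :
    Subsingleton {t : Fin r → Equiv.Perm (Fin n) //
      (List.ofFn t).prod = π ∧ IsStrictMonFactor t} ∧
    Nonempty {t : Fin r → Equiv.Perm (Fin n) //
      (List.ofFn t).prod = π ∧ IsStrictMonFactor t} := by
  have hc := factorCount r π
  rw [if_pos h] at hc
  exact Nat.card_eq_one_iff_unique.mp hc

lemma ftc_conj_inv {n : ℕ} (k σ : Equiv.Perm (Fin n)) :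
    fullCycleType (k⁻¹ * σ⁻¹ * k) = fullCycleType σ := by
  have h : k⁻¹ * σ⁻¹ * k = k⁻¹ * σ⁻¹ * (k⁻¹)⁻¹ := by rw [inv_inv]
  rw [h, fullCycleType_conj, fullCycleType_inv]

/-- `H_g^{•,<}(α,β) = |Cl_β| · #{σ ∈ Cl_α : n+2-ℓ(α)-ℓ(β)-ℓ([σ⁻¹σ_β]) = 2g}`
for any fixed `σ_β ∈ Cl_β`; in particular `|Cl_β|` divides `H_g^{•,<}(α,β)`. -/
theorem statement6 (n g : ℕ) (h1 : 1 ≤ n) (α β : Nat.Partition n) (r : ℕ)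
    (hr : r + 2 = 2 * g + α.parts.card + β.parts.card)
    (σβ : Equiv.Perm (Fin n)) (hσβ : fullCycleType σβ = β.parts) :
    Hstrict n r α β =
        Nat.card {σ : Equiv.Perm (Fin n) // fullCycleType σ = β.parts} *
          Nat.card {σ : Equiv.Perm (Fin n) // fullCycleType σ = α.parts ∧
            n + 2 = α.parts.card + β.parts.card + numCycles (σ⁻¹ * σβ) + 2 * g} ∧
      Nat.card {σ : Equiv.Perm (Fin n) // fullCycleType σ = β.parts} ∣ Hstrict n r α β := by
  classical
  have key : Hstrict n r α β =
      Nat.card {σ : Equiv.Perm (Fin n) // fullCycleType σ = β.parts} *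
        Nat.card {σ : Equiv.Perm (Fin n) // fullCycleType σ = α.parts ∧
          n + 2 = α.parts.card + β.parts.card + numCycles (σ⁻¹ * σβ) + 2 * g} := by
    have hA : Hstrict n r α β = Nat.card {p : Equiv.Perm (Fin n) × Equiv.Perm (Fin n) //
        fullCycleType p.1 = α.parts ∧ fullCycleType p.2 = β.parts ∧
        n = numCycles ((p.1 * p.2)⁻¹) + r} := by
      unfold Hstrict
      apply Nat.card_eq_of_bijective (fun t => ⟨(t.1.1, t.1.2.1), t.2.2.1, t.2.2.2.1, by
        by_contra hC
        exact (factor_empty hC).false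
          ⟨t.1.2.2, eq_inv_of_mul_eq_one_right t.2.1, t.2.2.2.2⟩⟩)
      constructor
      · rintro ⟨⟨σa, σb, u⟩, hu1, hu2, hu3, hu4⟩ ⟨⟨σa', σb', u'⟩, hv1, hv2, hv3, hv4⟩ h
        simp only [Subtype.mk.injEq, Prod.mk.injEq] at h ⊢
        obtain ⟨h5, h6⟩ := h
        subst h5; subst h6
        refine ⟨rfl, rfl, ?_⟩
        have hcond : n = numCycles ((σa * σb)⁻¹) + r := by
          by_contra hC
          exact (factor_empty hC).false ⟨u, eq_inv_of_mul_eq_one_right hu1, hu4⟩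
        have hsub := (factor_unique hcond).1
        have heq : (⟨u, eq_inv_of_mul_eq_one_right hu1, hu4⟩ :
            {t : Fin r → Equiv.Perm (Fin n) //
              (List.ofFn t).prod = (σa * σb)⁻¹ ∧ IsStrictMonFactor t}) =
            ⟨u', eq_inv_of_mul_eq_one_right hv1, hv4⟩ := hsub.elim _ _
        exact congrArg Subtype.val heq
      · rintro ⟨⟨σa, σb⟩, h1, h2, h3⟩
        obtain ⟨-, ⟨⟨u, hu1, hu2⟩⟩⟩ := factor_unique h3
        refine ⟨⟨⟨σa, σb, u⟩, by rw [hu1]; group, h1, h2, hu2⟩, rfl⟩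
    have hconj : ∀ q : {σ : Equiv.Perm (Fin n) // fullCycleType σ = β.parts},
        ∃ k : Equiv.Perm (Fin n), k * σβ * k⁻¹ = q.1 := fun q =>
      isConj_iff.mp (Equiv.Perm.isConj_iff_cycleType_eq.mpr
        (cycleType_eq_of_fullCycleType_eq (by rw [hσβ, q.2])))
    choose c hc using hconj
    have hB : Nat.card {p : Equiv.Perm (Fin n) × Equiv.Perm (Fin n) //
        fullCycleType p.1 = α.parts ∧ fullCycleType p.2 = β.parts ∧
        n = numCycles ((p.1 * p.2)⁻¹) + r} =
        Nat.card ({σ : Equiv.Perm (Fin n) // fullCycleType σ = β.parts} ×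
          {σ : Equiv.Perm (Fin n) // fullCycleType σ = α.parts ∧
            n + 2 = α.parts.card + β.parts.card + numCycles (σ⁻¹ * σβ) + 2 * g}) := by
      apply Nat.card_eq_of_bijective (fun p =>
        (⟨p.1.2, p.2.2.1⟩, ⟨(c ⟨p.1.2, p.2.2.1⟩)⁻¹ * p.1.1⁻¹ * c ⟨p.1.2, p.2.2.1⟩, by
            rw [ftc_conj_inv]; exact p.2.1, by
            have h3 := p.2.2.2
            rw [numCycles_inv] at h3
            have h4 : ((c ⟨p.1.2, p.2.2.1⟩)⁻¹ * p.1.1⁻¹ * c ⟨p.1.2, p.2.2.1⟩)⁻¹ * σβ =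
                (c ⟨p.1.2, p.2.2.1⟩)⁻¹ *
                  (p.1.1 * (c ⟨p.1.2, p.2.2.1⟩ * σβ * (c ⟨p.1.2, p.2.2.1⟩)⁻¹)) *
                  ((c ⟨p.1.2, p.2.2.1⟩)⁻¹)⁻¹ := by group
            rw [h4, hc ⟨p.1.2, p.2.2.1⟩, numCycles_conj]
            have h8 : (↑(⟨p.1.2, p.2.2.1⟩ : {σ : Equiv.Perm (Fin n) //
                fullCycleType σ = β.parts}) : Equiv.Perm (Fin n)) = p.1.2 := rfl
            rw [h8]
            omega⟩))
      constructor
      · rintro ⟨⟨σa, σb⟩, h1, h2, h3⟩ ⟨⟨σa', σb'⟩, h1', h2', h3'⟩ h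
        simp only [Prod.mk.injEq, Subtype.mk.injEq] at h
        obtain ⟨hb, ha⟩ := h
        subst hb
        have ha' : (c ⟨σb, h2⟩)⁻¹ * σa⁻¹ * c ⟨σb, h2⟩ = (c ⟨σb, h2⟩)⁻¹ * σa'⁻¹ * c ⟨σb, h2⟩ := ha
        have ha'' : σa = σa' := by
          have h9 := congrArg (fun z => c ⟨σb, h2⟩ * z * (c ⟨σb, h2⟩)⁻¹) ha'
          have e : ∀ σ : Equiv.Perm (Fin n),
              c ⟨σb, h2⟩ * ((c ⟨σb, h2⟩)⁻¹ * σ⁻¹ * c ⟨σb, h2⟩) * (c ⟨σb, h2⟩)⁻¹ = σ⁻¹ := by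
            intro σ; group
          rw [e, e] at h9
          exact inv_injective h9
        subst ha''
        rfl
      · rintro ⟨q, s⟩
        refine ⟨⟨(c q * s.1⁻¹ * (c q)⁻¹, q.1),
          by rw [fullCycleType_conj, fullCycleType_inv]; exact s.2.1, q.2, ?_⟩, ?_⟩
        · rw [← hc q]
          have h5 : ((c q * s.1⁻¹ * (c q)⁻¹) * (c q * σβ * (c q)⁻¹))⁻¹ =
              c q * (s.1⁻¹ * σβ)⁻¹ * (c q)⁻¹ := by group
          rw [h5, numCycles_conj, numCycles_inv]
          have h6 := s.2.2
          omega
        · refine Prod.ext (Subtype.ext rfl) (Subtype.ext ?_)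
          show (c q)⁻¹ * (c q * s.1⁻¹ * (c q)⁻¹)⁻¹ * c q = s.1
          group
    rw [hA, hB, Nat.card_prod]
  exact ⟨key, key ▸ dvd_mul_right _ _⟩
end

section
/- Let n ≥ 1 and r ≥ 0. The product map (τ_1, …, τ_r) ↦ τ_1 ⋯ τ_r is a bijection from the set Σ_{n,r} of r-tuples of transpositions of {1,…,n} such that, writing τ_i as the transposition of a_i < b_i, one has b_1 < b_2 < ⋯ < b_r, onto the set of permutations σ of {1,…,n} with exactly n − r cycles (counting fixed points). In particular every permutation σ ∈ S_n admits a unique such primitive factorization, and its length is n − ℓ([σ]). -/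
open Matrix

namespace Statement8Aux

open Equiv Equiv.Perm

lemma prod_fix {α : Type*} (l : List (Perm α)) (x : α) (h : ∀ p ∈ l, p x = x) :
    l.prod x = x := by
  induction l with
  | nil => simp
  | cons p l ih =>
    simp only [List.prod_cons, Perm.mul_apply]
    rw [ih (fun q hq => h q (List.mem_cons_of_mem p hq)), h p (List.mem_cons_self)]

lemma cycle_extend {α : Type*} [Fintype α] [DecidableEq α] {c : Perm α} (hc : c.IsCycle)
    {a b : α} (hab : a ≠ b) (ha : a ∈ c.support) (hb : b ∉ c.support) :
    (c * swap a b).IsCycle ∧ (c * swap a b).support = insert b c.support := by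
  have hcb : c b = b := by simpa [Perm.notMem_support] using hb
  have hca : c a ≠ a := Perm.mem_support.1 ha
  set g := c * swap a b with hg
  have hga : g a = b := by simp [hg, Perm.mul_apply, swap_apply_left, hcb]
  have hgb : g b = c a := by simp [hg, Perm.mul_apply, swap_apply_right]
  have hgx : ∀ x, x ≠ a → x ≠ b → g x = c x := by
    intro x hxa hxb; simp [hg, Perm.mul_apply, swap_apply_of_ne_of_ne hxa hxb]
  have hcab : c a ≠ b := fun h => hb (h ▸ Perm.apply_mem_support.2 ha)
  have hsupp : g.support = insert b c.support := by
    ext x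
    simp only [Perm.mem_support, Finset.mem_insert]
    by_cases hxb : x = b
    · subst hxb; simp [hgb, hcab]
    by_cases hxa : x = a
    · subst hxa; simp [hga, Ne.symm hab, hca, hxb]
    · rw [hgx x hxa hxb]; simp [hxb]
  have key : ∀ k : ℕ, g.SameCycle a ((c ^ k) a) := by
    intro k
    induction k with
    | zero => exact SameCycle.refl g a
    | succ k ih =>
      by_cases hy : (c ^ k) a = a
      · refine ⟨2, ?_⟩
        have h2 : (g ^ (2:ℤ)) a = g (g a) := by
          rw [zpow_two, Perm.mul_apply]
        rw [h2, hga, hgb, pow_succ', Perm.mul_apply, hy]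
      · have hyb : (c ^ k) a ≠ b := by
          intro h
          exact hb (h ▸ (Perm.pow_apply_mem_support).2 ha)
        have hstep : (c ^ (k+1)) a = g ((c ^ k) a) := by
          rw [pow_succ', Perm.mul_apply, hgx _ hy hyb]
        rw [hstep]
        exact ih.apply_right
  constructor
  · refine ⟨a, by rw [hga]; exact Ne.symm hab, fun y hy => ?_⟩
    by_cases hyb : y = b
    · exact ⟨1, by simpa [hga] using hyb.symm⟩
    by_cases hya : y = a
    · exact hya ▸ SameCycle.refl g a
    · have hyc : c y ≠ y := by rw [← hgx y hya hyb]; exact hy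
      obtain ⟨i, hi⟩ := hc.exists_pow_eq hca hyc
      exact hi ▸ key i
  · exact hsupp

variable {n : ℕ}

lemma numCycles_eq (σ : Perm (Fin n)) :
    numCycles σ = Multiset.card σ.cycleType + (n - σ.cycleType.sum) := by
  simp [numCycles, fullCycleType]

lemma sum_le (σ : Perm (Fin n)) : σ.cycleType.sum ≤ n := by
  rw [sum_cycleType]
  simpa using Finset.card_le_univ σ.support

lemma numCycles_one : numCycles (1 : Perm (Fin n)) = n := by
  simp [numCycles_eq]

lemma one_le_numCycles (h1 : 1 ≤ n) (σ : Perm (Fin n)) : 1 ≤ numCycles σ := by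
  rcases Nat.eq_zero_or_pos (Multiset.card σ.cycleType) with h | h
  · have : σ.cycleType = 0 := Multiset.card_eq_zero.1 h
    rw [numCycles_eq, this]; simpa using h1
  · rw [numCycles_eq]; omega

lemma eq_one_of_numCycles (σ : Perm (Fin n)) (h : numCycles σ = n) : σ = 1 := by
  rw [numCycles_eq] at h
  have hs := sum_le σ
  have h2 : σ.cycleType.sum = Multiset.card σ.cycleType := by omega
  have h3 : 2 * Multiset.card σ.cycleType ≤ σ.cycleType.sum := by
    have := Multiset.card_nsmul_le_sum (fun x hx => two_le_of_mem_cycleType (σ := σ) hx)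
    simpa [smul_eq_mul, mul_comm] using this
  have : Multiset.card σ.cycleType = 0 := by omega
  exact cycleType_eq_zero.1 (Multiset.card_eq_zero.1 this)

lemma numCycles_mul_swap {σ : Perm (Fin n)} {a b : Fin n}
    (hab : a ≠ b) (hb : σ b = b) : numCycles (σ * swap a b) + 1 = numCycles σ := by
  have hbs : b ∉ σ.support := by simp [Perm.notMem_support, hb]
  have hsum : σ.cycleType.sum = σ.support.card := sum_cycleType σ
  by_cases ha : σ a = a
  · have has : a ∉ σ.support := by simp [Perm.notMem_support, ha]
    have hdisj : Disjoint σ (swap a b) := by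
      intro x
      by_cases hxa : x = a
      · subst hxa; left; exact ha
      by_cases hxb : x = b
      · subst hxb; left; exact hb
      · right; exact swap_apply_of_ne_of_ne hxa hxb
    have hct : (σ * swap a b).cycleType = σ.cycleType + {2} := by
      rw [hdisj.cycleType_mul, (isCycle_swap hab).cycleType, card_support_swap hab]
    have hcard : (insert a (insert b σ.support)).card ≤ n := by
      simpa using Finset.card_le_univ (insert a (insert b σ.support))
    rw [Finset.card_insert_of_notMem (by simp [hab, has]),
      Finset.card_insert_of_notMem hbs] at hcard
    rw [numCycles_eq, numCycles_eq, hct]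
    simp only [Multiset.card_add, Multiset.sum_add]
    have : Multiset.card ({2} : Multiset ℕ) = 1 ∧ ({2} : Multiset ℕ).sum = 2 := by simp
    omega
  · set c := σ.cycleOf a with hc
    have hcyc : c.IsCycle := isCycle_cycleOf σ ha
    have hmemc : ∀ z, z ∈ c.support ↔ σ.SameCycle a z ∧ z ∈ σ.support := by
      intro z; rw [hc, mem_support_cycleOf_iff]
      constructor
      · rintro ⟨h1, _⟩; exact ⟨h1, h1.mem_support_iff.1 (mem_support.2 ha)⟩
      · rintro ⟨h1, h2⟩; exact ⟨h1, mem_support.2 ha⟩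
    have ha' : a ∈ c.support := (hmemc a).2 ⟨SameCycle.refl σ a, mem_support.2 ha⟩
    have hb' : b ∉ c.support := fun h => hbs ((hmemc b).1 h).2
    have happ : ∀ z ∈ c.support, c z = σ z := by
      intro z hz
      rw [hc, cycleOf_apply, if_pos ((hmemc z).1 hz).1]
    obtain ⟨hgcyc, hgsupp⟩ := cycle_extend hcyc hab ha' hb'
    set g := c * swap a b with hg
    set ρ := σ * c⁻¹ with hρ
    have hρfix : ∀ z ∈ c.support, ρ z = z := by
      intro z hz
      have hz' : c⁻¹ z ∈ c.support := by
        rw [← Perm.apply_mem_support (f := c), ← Perm.mul_apply, mul_inv_cancel, Perm.one_apply]; exact hz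
      rw [hρ, Perm.mul_apply, ← happ _ hz', ← Perm.mul_apply, mul_inv_cancel, Perm.one_apply]
    have hρb : ρ b = b := by
      have hcb : c⁻¹ b = b := by
        have : c b = b := by simpa [Perm.notMem_support] using hb'
        nth_rewrite 1 [← this]
        rw [← Perm.mul_apply, inv_mul_cancel, Perm.one_apply]
      rw [hρ, Perm.mul_apply, hcb, hb]
    have hρc : Disjoint ρ c := by
      intro x
      by_cases hx : x ∈ c.support
      · exact Or.inl (hρfix x hx)
      · exact Or.inr (by simpa [Perm.notMem_support] using hx)
    have hρg : Disjoint ρ g := by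
      intro x
      by_cases hx : x ∈ g.support
      · rw [hgsupp, Finset.mem_insert] at hx
        rcases hx with rfl | hx
        · exact Or.inl hρb
        · exact Or.inl (hρfix x hx)
      · exact Or.inr (by simpa [Perm.notMem_support] using hx)
    have hσeq : σ = ρ * c := by rw [hρ, inv_mul_cancel_right]
    have hprod : σ * swap a b = ρ * g := by rw [hg, hσeq, mul_assoc]
    have h1 : (σ * swap a b).cycleType = ρ.cycleType + {c.support.card + 1} := by
      rw [hprod, hρg.cycleType_mul, hgcyc.cycleType, hgsupp,
        Finset.card_insert_of_notMem hb']
    have h2 : σ.cycleType = ρ.cycleType + {c.support.card} := by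
      rw [hσeq, hρc.cycleType_mul, hcyc.cycleType]
    have hlt : σ.support.card + 1 ≤ n := by
      have := Finset.card_le_univ (insert b σ.support)
      rw [Finset.card_insert_of_notMem hbs] at this
      simpa using this
    have hsum2 : σ.cycleType.sum = ρ.cycleType.sum + c.support.card := by
      rw [h2]; simp
    rw [numCycles_eq, numCycles_eq, h1, h2]
    simp only [Multiset.card_add, Multiset.sum_add, Multiset.card_singleton,
      Multiset.sum_singleton]
    omega

lemma numCycles_mul_swap' {σ : Perm (Fin n)} {a b : Fin n}
    (hab : a ≠ b) (hsab : σ a = b) : numCycles (σ * swap a b) = numCycles σ + 1 := by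
  have hfix : (σ * swap a b) b = b := by
    simp [Perm.mul_apply, swap_apply_right, hsab]
  have := numCycles_mul_swap hab hfix
  rw [mul_assoc, Equiv.swap_mul_self, mul_one] at this
  omega

lemma forward : ∀ (r : ℕ) (a b : Fin r → Fin n), (∀ i, a i < b i) → StrictMono b →
    numCycles (List.ofFn fun i => swap (a i) (b i)).prod = n - r := by
  intro r
  induction r with
  | zero => intro a b _ _; simpa using numCycles_one
  | succ r ih =>
    intro a b hab hmono
    rw [List.ofFn_succ', List.prod_concat]
    have hfix : (List.ofFn fun i : Fin r =>
        swap (a (Fin.castSucc i)) (b (Fin.castSucc i))).prod (b (Fin.last r)) = b (Fin.last r) := by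
      apply prod_fix
      intro p hp
      rw [List.mem_ofFn] at hp
      obtain ⟨i, rfl⟩ := hp
      have h1 : b (Fin.last r) ≠ a (Fin.castSucc i) :=
        Ne.symm (ne_of_lt ((hab _).trans (hmono (Fin.castSucc_lt_last i))))
      have h2 : b (Fin.last r) ≠ b (Fin.castSucc i) :=
        Ne.symm (ne_of_lt (hmono (Fin.castSucc_lt_last i)))
      exact swap_apply_of_ne_of_ne h1 h2
    have habl : a (Fin.last r) ≠ b (Fin.last r) := ne_of_lt (hab _)
    have hmul := numCycles_mul_swap habl hfix
    have hih : numCycles (List.ofFn fun i : Fin r =>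
        swap (a (Fin.castSucc i)) (b (Fin.castSucc i))).prod = n - r :=
      ih (fun i => a (Fin.castSucc i)) (fun i => b (Fin.castSucc i))
        (fun i => hab _) (fun i j hij => hmono (by simpa using hij))
    omega

/-- Structure of a strict-mono factorization with at least one factor. -/
lemma structure_lemma {r : ℕ} (a b : Fin (r+1) → Fin n) (hab : ∀ i, a i < b i)
    (hmono : StrictMono b) :
    (∀ x, b (Fin.last r) < x → (List.ofFn fun i => swap (a i) (b i)).prod x = x) ∧
    (List.ofFn fun i => swap (a i) (b i)).prod (b (Fin.last r)) < b (Fin.last r) ∧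
    (List.ofFn fun i => swap (a i) (b i)).prod (a (Fin.last r)) = b (Fin.last r) ∧
    (List.ofFn fun i : Fin r => swap (a (Fin.castSucc i)) (b (Fin.castSucc i))).prod =
      (List.ofFn fun i => swap (a i) (b i)).prod * swap (a (Fin.last r)) (b (Fin.last r)) := by
  set M := b (Fin.last r) with hM
  set A := a (Fin.last r) with hA
  set P := (List.ofFn fun i : Fin r => swap (a (Fin.castSucc i)) (b (Fin.castSucc i))).prod
    with hP
  have hσ : (List.ofFn fun i => swap (a i) (b i)).prod = P * swap A M := by
    rw [List.ofFn_succ', List.prod_concat]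
  have hPfix : ∀ x, M ≤ x → P x = x := by
    intro x hx
    apply prod_fix
    intro p hp
    rw [List.mem_ofFn] at hp
    obtain ⟨i, rfl⟩ := hp
    have hbi : b (Fin.castSucc i) < M := hmono (Fin.castSucc_lt_last i)
    have h1 : x ≠ a (Fin.castSucc i) := Ne.symm (ne_of_lt (((hab _).trans hbi).trans_le hx))
    have h2 : x ≠ b (Fin.castSucc i) := Ne.symm (ne_of_lt (hbi.trans_le hx))
    exact swap_apply_of_ne_of_ne h1 h2
  have hPlt : ∀ x, x < M → P x < M := by
    intro x hx
    by_contra h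
    push_neg at h
    have h2 : P (P x) = P x := hPfix _ h
    have h3 : P x = x := P.injective h2
    rw [h3] at h
    exact absurd hx (not_lt.2 h)
  refine ⟨?_, ?_, ?_, ?_⟩
  · intro x hx
    rw [hσ, Perm.mul_apply,
      swap_apply_of_ne_of_ne (Ne.symm (ne_of_lt ((hab _).trans hx))) (Ne.symm (ne_of_lt hx)),
      hPfix x hx.le]
  · rw [hσ, Perm.mul_apply, swap_apply_right]
    exact hPlt A (hab _)
  · rw [hσ, Perm.mul_apply, swap_apply_left]
    exact hPfix M le_rfl
  · rw [hσ, mul_assoc, Equiv.swap_mul_self, mul_one]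

lemma uniq : ∀ (r : ℕ) (σ : Perm (Fin n)) (t t' : Fin r → Perm (Fin n)),
    IsStrictMonFactor t → (List.ofFn t).prod = σ →
    IsStrictMonFactor t' → (List.ofFn t').prod = σ → t = t' := by
  intro r
  induction r with
  | zero => intro _ t t' _ _ _ _; funext i; exact i.elim0
  | succ r ih =>
    intro σ t t' ⟨a, b, hab, hmono⟩ hprod ⟨a', b', hab', hmono'⟩ hprod'
    have ht : t = fun i => swap (a i) (b i) := funext fun i => (hab i).2
    have ht' : t' = fun i => swap (a' i) (b' i) := funext fun i => (hab' i).2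
    rw [ht] at hprod
    rw [ht'] at hprod'
    obtain ⟨hfix, hlt, hlast, hpeel⟩ := structure_lemma a b (fun i => (hab i).1) hmono
    obtain ⟨hfix', hlt', hlast', hpeel'⟩ := structure_lemma a' b' (fun i => (hab' i).1) hmono'
    rw [hprod] at hfix hlt hlast hpeel
    rw [hprod'] at hfix' hlt' hlast' hpeel'
    -- the largest moved points agree
    have hbM : b (Fin.last r) = b' (Fin.last r) := by
      by_contra hne
      rcases lt_or_gt_of_ne hne with h | h
      · have := hfix _ h
        omega
      · have := hfix' _ h
        omega
    have haM : a (Fin.last r) = a' (Fin.last r) := by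
      apply σ.injective
      rw [hlast, hlast', hbM]
    have hlastEq : t (Fin.last r) = t' (Fin.last r) := by
      rw [ht, ht']
      simp only
      rw [hbM, haM]
    have hpeelEq : (List.ofFn fun i : Fin r => swap (a (Fin.castSucc i)) (b (Fin.castSucc i))).prod
        = (List.ofFn fun i : Fin r => swap (a' (Fin.castSucc i)) (b' (Fin.castSucc i))).prod := by
      rw [hpeel, hpeel', hbM, haM]
    have hrest := ih ((List.ofFn fun i : Fin r =>
        swap (a (Fin.castSucc i)) (b (Fin.castSucc i))).prod)
      (fun i => swap (a (Fin.castSucc i)) (b (Fin.castSucc i)))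
      (fun i => swap (a' (Fin.castSucc i)) (b' (Fin.castSucc i)))
      ⟨fun i => a (Fin.castSucc i), fun i => b (Fin.castSucc i),
        fun i => ⟨(hab _).1, rfl⟩, fun i j hij => hmono (by simpa using hij)⟩ rfl
      ⟨fun i => a' (Fin.castSucc i), fun i => b' (Fin.castSucc i),
        fun i => ⟨(hab' _).1, rfl⟩, fun i j hij => hmono' (by simpa using hij)⟩ hpeelEq.symm
    funext i
    rcases eq_or_ne i (Fin.last r) with rfl | hi
    · exact hlastEq
    · obtain ⟨j, rfl⟩ := Fin.exists_castSucc_eq.mpr hi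
      have := congrFun hrest j
      rw [ht, ht']
      exact this

lemma exist (h1 : 1 ≤ n) : ∀ (r : ℕ) (σ : Perm (Fin n)), numCycles σ = n - r →
    ∃ a b : Fin r → Fin n, (∀ i, a i < b i) ∧ StrictMono b ∧
      (List.ofFn fun i => swap (a i) (b i)).prod = σ ∧ ∀ i, b i ∈ σ.support := by
  intro r
  induction r with
  | zero =>
    intro σ hσ
    have : σ = 1 := eq_one_of_numCycles σ (by simpa using hσ)
    subst this
    exact ⟨Fin.elim0, Fin.elim0, fun i => i.elim0, fun i => i.elim0,
      by simp, fun i => i.elim0⟩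
  | succ r ih =>
    intro σ hσ
    have hne : σ ≠ 1 := by
      intro h
      rw [h, numCycles_one] at hσ
      have : n - (r + 1) < n := Nat.sub_lt h1 (Nat.succ_pos r)
      omega
    have hsupp : σ.support.Nonempty := by
      rw [Finset.nonempty_iff_ne_empty]
      intro h
      exact hne (support_eq_empty_iff.1 h)
    set M := σ.support.max' hsupp with hMdef
    have hM : M ∈ σ.support := σ.support.max'_mem hsupp
    have hfixgt : ∀ x, M < x → σ x = x := by
      intro x hx
      by_contra h
      have := σ.support.le_max' x (mem_support.2 h)
      rw [← hMdef] at this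
      omega
    set A := σ⁻¹ M with hAdef
    have hσA : σ A = M := σ.apply_symm_apply M
    have hAM : A ≠ M := by
      intro h
      rw [h] at hσA
      exact (mem_support.1 hM) hσA
    have hA : A ∈ σ.support := by
      rw [mem_support, hσA]
      exact Ne.symm hAM
    have hAltM : A < M := lt_of_le_of_ne (σ.support.le_max' A hA) hAM
    set σ' := σ * swap A M with hσ'def
    have hcount : numCycles σ' = numCycles σ + 1 := numCycles_mul_swap' hAM hσA
    have h1n : 1 ≤ numCycles σ := one_le_numCycles h1 σ
    have hr1n : r + 1 ≤ n := by omega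
    have hσ' : numCycles σ' = n - r := by omega
    have hsub : ∀ x, x ∈ σ'.support → x ∈ σ.support := by
      intro x hx
      by_contra h
      rw [Perm.notMem_support] at h
      have hxA : x ≠ A := fun he => (mem_support.1 hA) (he ▸ h)
      have hxM : x ≠ M := fun he => (mem_support.1 hM) (he ▸ h)
      rw [mem_support, hσ'def, Perm.mul_apply, swap_apply_of_ne_of_ne hxA hxM] at hx
      exact hx h
    have hfixtop : ∀ x, M ≤ x → σ' x = x := by
      intro x hx
      rcases eq_or_lt_of_le hx with rfl | hlt
      · rw [hσ'def, Perm.mul_apply, swap_apply_right, hσA]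
      · have hxA : x ≠ A := Ne.symm (ne_of_lt (hAltM.trans hlt))
        have hxM : x ≠ M := Ne.symm (ne_of_lt hlt)
        rw [hσ'def, Perm.mul_apply, swap_apply_of_ne_of_ne hxA hxM]
        exact hfixgt x hlt
    obtain ⟨a', b', hab', hmono', hprod', hmem'⟩ := ih σ' hσ'
    have hblt : ∀ i, b' i < M := by
      intro i
      by_contra h
      push_neg at h
      exact (mem_support.1 (hmem' i)) (hfixtop _ h)
    refine ⟨Fin.snoc a' A, Fin.snoc b' M, ?_, ?_, ?_, ?_⟩
    · intro i
      rcases eq_or_ne i (Fin.last r) with rfl | hi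
      · simpa using hAltM
      · obtain ⟨j, rfl⟩ := Fin.exists_castSucc_eq.mpr hi
        simpa using hab' j
    · intro i j hij
      rcases eq_or_ne j (Fin.last r) with rfl | hj
      · obtain ⟨i', rfl⟩ := Fin.exists_castSucc_eq.mpr (ne_of_lt hij)
        simpa using hblt i'
      · obtain ⟨j', rfl⟩ := Fin.exists_castSucc_eq.mpr hj
        have hij' : i < Fin.last r := hij.trans (Fin.castSucc_lt_last j')
        obtain ⟨i', rfl⟩ := Fin.exists_castSucc_eq.mpr (ne_of_lt hij')
        have : i' < j' := by simpa using hij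
        simpa using hmono' this
    · rw [List.ofFn_succ', List.prod_concat]
      simp only [Fin.snoc_castSucc, Fin.snoc_last]
      rw [hprod', hσ'def, mul_assoc, Equiv.swap_mul_self, mul_one]
    · intro i
      rcases eq_or_ne i (Fin.last r) with rfl | hi
      · simpa using hM
      · obtain ⟨j, rfl⟩ := Fin.exists_castSucc_eq.mpr hi
        simpa using hsub _ (hmem' j)

end Statement8Aux

/-- The product map `(τ_1, …, τ_r) ↦ τ_1 ⋯ τ_r` is a bijection from
`Σ_{n,r}` onto the permutations of `{1,…,n}` with exactly `n - r` cycles: every such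
tuple multiplies to a permutation with `n - r` cycles, and every permutation with `n - r`
cycles admits a unique primitive factorization. -/
theorem statement8 (n r : ℕ) (h1 : 1 ≤ n) :
    (∀ t : Fin r → Equiv.Perm (Fin n), IsStrictMonFactor t →
        numCycles (List.ofFn t).prod = n - r) ∧
      ∀ σ : Equiv.Perm (Fin n), numCycles σ = n - r →
        ∃! t : Fin r → Equiv.Perm (Fin n),
          IsStrictMonFactor t ∧ (List.ofFn t).prod = σ := by
  constructor
  · rintro t ⟨a, b, hab, hmono⟩
    have ht : t = fun i => Equiv.swap (a i) (b i) := funext fun i => (hab i).2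
    rw [ht]
    exact Statement8Aux.forward r a b (fun i => (hab i).1) hmono
  · intro σ hσ
    obtain ⟨a, b, hab, hmono, hprod, -⟩ := Statement8Aux.exist h1 r σ hσ
    refine ⟨fun i => Equiv.swap (a i) (b i),
      ⟨⟨a, b, fun i => ⟨hab i, rfl⟩, hmono⟩, hprod⟩, ?_⟩
    rintro t' ⟨ht', hp'⟩
    exact Statement8Aux.uniq r σ t' (fun i => Equiv.swap (a i) (b i)) ht' hp'
      ⟨a, b, fun i => ⟨hab i, rfl⟩, hmono⟩ hprod
end

section
/- Let 1 ≤ n ≤ N and let μ and ν be Borel probability measures on the space of N×N complex matrices, each invariant under unitary conjugation (for every U ∈ U(N), the pushforward under M ↦ U M U* equals the measure itself) and each supported on a compact set. Then the averaged precursor K_n^{(N)} is additive with respect to the additive convolution: ∫∫ K_n^{(N)}(A + B) dμ(A) dν(B) = ∫ K_n^{(N)}(A) dμ(A) + ∫ K_n^{(N)}(B) dν(B). -/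
open MeasureTheory Matrix

/-- The space of `N × N` complex matrices carries its Borel σ-algebra. -/
noncomputable instance (N : ℕ) : MeasurableSpace (Matrix (Fin N) (Fin N) ℂ) := borel _

instance (N : ℕ) : BorelSpace (Matrix (Fin N) (Fin N) ℂ) := ⟨rfl⟩

set_option maxHeartbeats 1000000

/-! ### Auxiliary development -/


instance instCompactUG (N : ℕ) : CompactSpace (UG N) := by
  suffices h : IsCompact (Matrix.unitaryGroup (Fin N) ℂ : Set (Matrix (Fin N) (Fin N) ℂ)) by
    exact isCompact_iff_compactSpace.mp h
  have hcpt : IsCompact (Set.pi Set.univ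
      (fun _ : Fin N => Set.pi Set.univ (fun _ : Fin N => Metric.closedBall (0:ℂ) 1)) :
      Set (Matrix (Fin N) (Fin N) ℂ)) :=
    isCompact_univ_pi fun _ => isCompact_univ_pi fun _ => isCompact_closedBall _ _
  refine hcpt.of_isClosed_subset ?_ ?_
  · have : (Matrix.unitaryGroup (Fin N) ℂ : Set (Matrix (Fin N) (Fin N) ℂ)) =
        {A | A * star A = 1} ∩ {A | star A * A = 1} := by
      ext A
      simp only [SetLike.mem_coe, Set.mem_inter_iff, Set.mem_setOf_eq]
      rw [Matrix.mem_unitaryGroup_iff]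
      exact ⟨fun h => ⟨h, mul_eq_one_comm.mp h⟩, fun h => h.1⟩
    rw [this]
    exact (isClosed_eq (continuous_id.matrix_mul (continuous_star)) continuous_const).inter
      (isClosed_eq ((continuous_star).matrix_mul continuous_id) continuous_const)
  · rintro (U : Matrix (Fin N) (Fin N) ℂ) hU
    replace hU : U * star U = 1 := Matrix.mem_unitaryGroup_iff.mp hU
    intro i _
    intro j _
    have h1 := congrFun (congrFun hU i) i
    rw [Matrix.mul_apply, Matrix.one_apply_eq] at h1
    have h2 : ∑ k, (Complex.normSq (U i k) : ℂ) = 1 := by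
      rw [← h1]
      refine Finset.sum_congr rfl fun k _ => ?_
      rw [Matrix.star_apply, Complex.star_def, Complex.mul_conj]
    have h3 : ∑ k, Complex.normSq (U i k) = 1 := by exact_mod_cast h2
    have h4 : Complex.normSq (U i j) ≤ 1 := by
      rw [← h3]
      exact Finset.single_le_sum (fun k _ => Complex.normSq_nonneg _) (Finset.mem_univ j)
    simp only [Metric.mem_closedBall, dist_zero_right]
    have h5 : ‖U i j‖ ^ 2 = Complex.normSq (U i j) := by
      rw [Complex.sq_norm]
    nlinarith [norm_nonneg (U i j)]

/-- The cyclic successor on `Fin n`. -/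
def nxtF {n : ℕ} (k : Fin n) : Fin n := ⟨(k.1 + 1) % n, Nat.mod_lt _ k.pos⟩

lemma nxtF_injective {n : ℕ} : Function.Injective (nxtF (n := n)) := by
  intro a b h
  have ha := a.isLt
  have hb := b.isLt
  have h' : (a.1 + 1) % n = (b.1 + 1) % n := congrArg Fin.val h
  have e : ∀ c : ℕ, c < n → (c + 1) % n = if c + 1 = n then 0 else c + 1 := by
    intro c hc
    split
    · simp [*]
    · exact Nat.mod_eq_of_lt (by omega)
  rw [e _ ha, e _ hb] at h'
  apply Fin.ext
  split_ifs at h' <;> omega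

lemma exists_boundary_s12 {n : ℕ} (S : Finset (Fin n)) (hS1 : S.Nonempty) (hS2 : S ≠ Finset.univ) :
    ∃ k, k ∉ S ∧ nxtF k ∈ S := by
  by_contra hcon
  push_neg at hcon
  obtain ⟨k0, hk0⟩ : ∃ k, k ∉ S := by
    by_contra hall
    push_neg at hall
    exact hS2 (Finset.eq_univ_iff_forall.mpr hall)
  have hiter : ∀ m : ℕ, nxtF^[m] k0 ∉ S := by
    intro m
    induction m with
    | zero => simpa
    | succ m ih => rw [Function.iterate_succ_apply']; exact hcon _ ih
  have hval : ∀ m : ℕ, (nxtF^[m] k0).1 = (k0.1 + m) % n := by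
    intro m
    induction m with
    | zero => simp [Nat.mod_eq_of_lt k0.isLt]
    | succ m ih =>
      rw [Function.iterate_succ_apply']
      show ((nxtF^[m] k0).1 + 1) % n = _
      rw [ih, Nat.mod_add_mod, Nat.add_assoc]
  obtain ⟨j, hj⟩ := hS1
  have hkey : nxtF^[n - k0.1 + j.1] k0 = j := by
    apply Fin.ext
    rw [hval]
    have hk := k0.isLt
    have hjl := j.isLt
    have e1 : k0.1 + (n - k0.1 + j.1) = n + j.1 := by omega
    rw [e1, Nat.add_mod_left]
    exact Nat.mod_eq_of_lt hjl
  exact hiter _ (hkey ▸ hj)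

/-- Partial product of the entries `X_{k, k+1 mod n}` over a subset `S` of indices. -/
noncomputable def pfun {N n : ℕ} (hn : n ≤ N) (S : Finset (Fin n))
    (X : Matrix (Fin N) (Fin N) ℂ) : ℂ :=
  ∏ k ∈ S, X (Fin.castLE hn k) (Fin.castLE hn (nxtF k))

lemma continuous_pfun_comp {N n : ℕ} (hn : n ≤ N) (S : Finset (Fin n)) {α : Type*}
    [TopologicalSpace α] {g : α → Matrix (Fin N) (Fin N) ℂ} (hg : Continuous g) :
    Continuous fun x => pfun hn S (g x) := by
  unfold pfun
  exact continuous_finset_prod _ fun k _ => hg.matrix_elem _ _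

set_option maxHeartbeats 1000000

lemma continuous_conjU_pair {N : ℕ} :
    Continuous fun q : Matrix (Fin N) (Fin N) ℂ × UG N => conjU q.2 q.1 := by
  unfold conjU
  exact ((continuous_subtype_val.comp continuous_snd).matrix_mul continuous_fst).matrix_mul
    (continuous_star.comp (continuous_subtype_val.comp continuous_snd))

lemma continuous_conjU_left {N : ℕ} (U : UG N) :
    Continuous fun X : Matrix (Fin N) (Fin N) ℂ => conjU U X := by
  unfold conjU
  exact (continuous_const.matrix_mul continuous_id).matrix_mul continuous_const

lemma continuous_conjU_right {N : ℕ} (A : Matrix (Fin N) (Fin N) ℂ) :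
    Continuous fun U : UG N => conjU U A := by
  unfold conjU
  exact (continuous_subtype_val.matrix_mul continuous_const).matrix_mul
    (continuous_star.comp continuous_subtype_val)

/-- Integrability of a continuous function against a finite measure supported on a compact set. -/
lemma integrable_of_cont_compact {α : Type*} [TopologicalSpace α] [MeasurableSpace α]
    [OpensMeasurableSpace α] (ρ : Measure α) [IsFiniteMeasure ρ] {s : Set α}
    (hs : IsCompact s) (hs0 : ρ sᶜ = 0) {q : α → ℂ} (hq : Continuous q) : Integrable q ρ := by
  obtain ⟨C, hC⟩ := hs.exists_bound_of_continuousOn hq.continuousOn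
  refine ⟨hq.aestronglyMeasurable, HasFiniteIntegral.of_bounded (C := C) ?_⟩
  filter_upwards [mem_ae_iff.mpr hs0] with x hx
  exact hC x hx

/-- Change of variables: integrating `f ∘ conjU U` against an invariant measure. -/
lemma integral_conj_invariant {N : ℕ} {ρ : Measure (Matrix (Fin N) (Fin N) ℂ)}
    (hρ : ∀ U : UG N, Measure.map (fun M => conjU U M) ρ = ρ) (U : UG N)
    {f : Matrix (Fin N) (Fin N) ℂ → ℂ} (hf : Continuous f) :
    ∫ X, f (conjU U X) ∂ρ = ∫ X, f X ∂ρ := by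
  conv_rhs => rw [← hρ U]
  rw [integral_map ((continuous_conjU_left U).measurable.aemeasurable) hf.aestronglyMeasurable]

/-- The diagonal unitary with `-1` in position `j0` and `1` elsewhere. -/
noncomputable def diagU {N : ℕ} (j0 : Fin N) : UG N :=
  ⟨Matrix.diagonal (fun j => if j = j0 then (-1 : ℂ) else 1), by
    rw [Matrix.mem_unitaryGroup_iff]
    rw [Matrix.star_eq_conjTranspose, Matrix.diagonal_conjTranspose,
      Matrix.diagonal_mul_diagonal]
    ext i k
    rcases eq_or_ne i k with rfl | hik
    · by_cases h : i = j0 <;> simp [Matrix.diagonal_apply_eq, h]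
    · simp [Matrix.diagonal_apply_ne _ hik, Matrix.one_apply_ne hik]⟩

lemma conjU_diagU_apply {N : ℕ} (j0 : Fin N) (X : Matrix (Fin N) (Fin N) ℂ) (a b : Fin N) :
    conjU (diagU j0) X a b =
      (if a = j0 then (-1 : ℂ) else 1) * X a b * (if b = j0 then (-1 : ℂ) else 1) := by
  unfold conjU diagU
  rw [Matrix.star_eq_conjTranspose, Matrix.diagonal_conjTranspose]
  simp only [Matrix.mul_diagonal, Matrix.diagonal_mul, Pi.star_apply]
  by_cases h : b = j0 <;> simp [h]

/-- Key vanishing lemma: the partial cyclic products integrate to zero over a unitarily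
invariant measure when the index subset is proper and nonempty. -/
lemma vanish_s12 {N n : ℕ} (hn : n ≤ N) {ρ : Measure (Matrix (Fin N) (Fin N) ℂ)}
    (hρ : ∀ U : UG N, Measure.map (fun M => conjU U M) ρ = ρ)
    (S : Finset (Fin n)) (hS1 : S.Nonempty) (hS2 : S ≠ Finset.univ) :
    ∫ X, pfun hn S X ∂ρ = 0 := by
  obtain ⟨k0, hk0n, hk0⟩ := exists_boundary_s12 S hS1 hS2
  set j0 : Fin N := Fin.castLE hn (nxtF k0) with hj0
  have htrans : ∀ X, pfun hn S (conjU (diagU j0) X) = - pfun hn S X := by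
    intro X
    unfold pfun
    rw [show ∀ (f : Fin n → ℂ), (∏ k ∈ S, f k) = ∏ k ∈ S, f k from fun _ => rfl]
    calc ∏ k ∈ S, conjU (diagU j0) X (Fin.castLE hn k) (Fin.castLE hn (nxtF k))
        = ∏ k ∈ S, ((if k = nxtF k0 then (-1:ℂ) else 1) *
            (X (Fin.castLE hn k) (Fin.castLE hn (nxtF k)) *
            (if nxtF k = nxtF k0 then (-1:ℂ) else 1))) := by
          have hite : ∀ a : Fin n, (if Fin.castLE hn a = j0 then (-1:ℂ) else 1)
              = (if a = nxtF k0 then (-1:ℂ) else 1) := by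
            intro a
            rw [hj0]
            by_cases h : a = nxtF k0
            · simp [h]
            · rw [if_neg h, if_neg (fun hc => h (Fin.castLE_injective hn hc))]
          refine Finset.prod_congr rfl fun k _ => ?_
          rw [conjU_diagU_apply, hite k, hite (nxtF k)]
          ring
      _ = (∏ k ∈ S, (if k = nxtF k0 then (-1:ℂ) else 1)) *
            ∏ k ∈ S, (X (Fin.castLE hn k) (Fin.castLE hn (nxtF k)) *
              (if nxtF k = nxtF k0 then (-1:ℂ) else 1)) := Finset.prod_mul_distrib
      _ = - ∏ k ∈ S, X (Fin.castLE hn k) (Fin.castLE hn (nxtF k)) := by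
          rw [Finset.prod_ite_eq' S (nxtF k0) (fun _ => (-1 : ℂ))]
          rw [if_pos hk0]
          rw [show (∏ k ∈ S, (X (Fin.castLE hn k) (Fin.castLE hn (nxtF k)) *
              (if nxtF k = nxtF k0 then (-1:ℂ) else 1))) =
              ∏ k ∈ S, X (Fin.castLE hn k) (Fin.castLE hn (nxtF k)) from ?_]
          · ring
          refine Finset.prod_congr rfl fun k hk => ?_
          rw [if_neg, mul_one]
          intro h
          exact hk0n (nxtF_injective h ▸ hk)
  have hint := integral_conj_invariant hρ (diagU j0)
    (f := pfun hn S) (continuous_pfun_comp hn S continuous_id)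
  rw [show (fun X => pfun hn S (conjU (diagU j0) X)) = fun X => - pfun hn S X from
    funext htrans] at hint
  rw [integral_neg] at hint
  have : (2 : ℂ) * ∫ X, pfun hn S X ∂ρ = 0 := by linear_combination -hint
  simpa using this

instance inst_s12 (N : ℕ) : SecondCountableTopology (Matrix (Fin N) (Fin N) ℂ) :=
  inferInstanceAs (SecondCountableTopology (Fin N → Fin N → ℂ))

instance inst_s12_2 (N : ℕ) : SecondCountableTopology (UG N) :=
  Topology.IsInducing.secondCountableTopology
    (f := (Subtype.val : UG N → Matrix (Fin N) (Fin N) ℂ)) Topology.IsInducing.subtypeVal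

lemma Kcum_eq {N n : ℕ} (hn : n ≤ N) (haarU : Measure (UG N))
    (X : Matrix (Fin N) (Fin N) ℂ) :
    Kcum haarU n X = (N:ℂ)^(n-1) * ∫ U, pfun hn Finset.univ (conjU U X) ∂haarU := by
  unfold Kcum
  rw [dif_pos hn]
  rfl

lemma integrable_prod_UG {N : ℕ} (haarU : Measure (UG N)) [IsProbabilityMeasure haarU]
    (ρ : Measure (Matrix (Fin N) (Fin N) ℂ)) [IsProbabilityMeasure ρ]
    {s : Set (Matrix (Fin N) (Fin N) ℂ)} (hs : IsCompact s) (hs0 : ρ sᶜ = 0)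
    {F : Matrix (Fin N) (Fin N) ℂ × UG N → ℂ} (hF : Continuous F) :
    Integrable F (ρ.prod haarU) := by
  refine integrable_of_cont_compact _ (hs.prod isCompact_univ) ?_ hF
  have h : (s ×ˢ (Set.univ : Set (UG N)))ᶜ = sᶜ ×ˢ (Set.univ : Set (UG N)) := by
    ext x; simp [Set.mem_prod]
  rw [h, Measure.prod_prod, hs0, zero_mul]

lemma swap_UG {N : ℕ} (haarU : Measure (UG N)) [IsProbabilityMeasure haarU]
    (ρ : Measure (Matrix (Fin N) (Fin N) ℂ)) [IsProbabilityMeasure ρ]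
    {s : Set (Matrix (Fin N) (Fin N) ℂ)} (hs : IsCompact s) (hs0 : ρ sᶜ = 0)
    {F : Matrix (Fin N) (Fin N) ℂ × UG N → ℂ} (hF : Continuous F) :
    ∫ X, ∫ U, F (X, U) ∂haarU ∂ρ = ∫ U, ∫ X, F (X, U) ∂ρ ∂haarU :=
  integral_integral_swap (integrable_prod_UG haarU ρ hs hs0 hF)

lemma continuous_pfun {N n : ℕ} (hn : n ≤ N) (S : Finset (Fin n)) :
    Continuous (pfun hn S) := by
  unfold pfun
  exact continuous_finset_prod _ fun k _ => continuous_id.matrix_elem _ _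

lemma avg_eq {N n : ℕ} (hn : n ≤ N) (haarU : Measure (UG N)) [IsProbabilityMeasure haarU]
    (ρ : Measure (Matrix (Fin N) (Fin N) ℂ)) [IsProbabilityMeasure ρ]
    (hρ : ∀ U : UG N, Measure.map (fun M => conjU U M) ρ = ρ)
    {s : Set (Matrix (Fin N) (Fin N) ℂ)} (hs : IsCompact s) (hs0 : ρ sᶜ = 0) :
    ∫ X, Kcum haarU n X ∂ρ = (N:ℂ)^(n-1) * ∫ X, pfun hn Finset.univ X ∂ρ := by
  simp only [Kcum_eq hn haarU]
  rw [integral_const_mul]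
  congr 1
  rw [swap_UG haarU ρ hs hs0 (continuous_pfun_comp hn _ continuous_conjU_pair)]
  rw [show (fun U : UG N => ∫ X, pfun hn Finset.univ (conjU U X) ∂ρ)
      = fun _ : UG N => ∫ X, pfun hn Finset.univ X ∂ρ from
    funext fun U => integral_conj_invariant hρ U (continuous_pfun hn _)]
  rw [integral_const]
  simp [measure_univ]

lemma conv_eq {N n : ℕ} (h1 : 1 ≤ n) (hn : n ≤ N) (haarU : Measure (UG N))
    [IsProbabilityMeasure haarU]
    (ν : Measure (Matrix (Fin N) (Fin N) ℂ)) [IsProbabilityMeasure ν]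
    (hν : ∀ U : UG N, Measure.map (fun M => conjU U M) ν = ν)
    {s : Set (Matrix (Fin N) (Fin N) ℂ)} (hs : IsCompact s) (hs0 : ν sᶜ = 0)
    (A : Matrix (Fin N) (Fin N) ℂ) :
    ∫ B, Kcum haarU n (A + B) ∂ν
      = Kcum haarU n A + (N:ℂ)^(n-1) * ∫ B, pfun hn Finset.univ B ∂ν := by
  classical
  haveI : NeZero n := ⟨by omega⟩
  have hconjadd : ∀ (U : UG N) (X Y : Matrix (Fin N) (Fin N) ℂ),
      conjU U (X + Y) = conjU U X + conjU U Y := by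
    intro U X Y
    unfold conjU
    rw [Matrix.mul_add, Matrix.add_mul]
  have step1 : ∫ B, Kcum haarU n (A + B) ∂ν
      = (N:ℂ)^(n-1) * ∫ B, ∫ U, pfun hn Finset.univ (conjU U A + conjU U B) ∂haarU ∂ν := by
    simp only [Kcum_eq hn haarU, hconjadd]
    rw [integral_const_mul]
  rw [step1]
  rw [swap_UG haarU ν hs hs0 (F := fun q => pfun hn Finset.univ (conjU q.2 A + conjU q.2 q.1))
    (continuous_pfun_comp hn _
      (((continuous_conjU_right A).comp continuous_snd).add continuous_conjU_pair))]
  have hinner : ∀ U : UG N, ∫ B, pfun hn Finset.univ (conjU U A + conjU U B) ∂ν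
      = pfun hn Finset.univ (conjU U A) + ∫ B, pfun hn Finset.univ B ∂ν := by
    intro U
    have hcv : ∫ B, pfun hn Finset.univ (conjU U A + conjU U B) ∂ν
        = ∫ B, pfun hn Finset.univ (conjU U A + B) ∂ν :=
      integral_conj_invariant hν U (f := fun Y => pfun hn Finset.univ (conjU U A + Y))
        ((continuous_pfun hn _).comp (continuous_const.add continuous_id))
    rw [hcv]
    have hexp : ∀ B : Matrix (Fin N) (Fin N) ℂ, pfun hn Finset.univ (conjU U A + B)
        = ∑ S ∈ (Finset.univ : Finset (Fin n)).powerset,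
            pfun hn S (conjU U A) * pfun hn (Finset.univ \ S) B := by
      intro B
      unfold pfun
      rw [← Finset.prod_add]
      exact Finset.prod_congr rfl fun k _ => rfl
    simp only [hexp]
    rw [integral_finset_sum _ (fun S _ =>
      ((integrable_of_cont_compact ν hs hs0 (continuous_pfun hn (Finset.univ \ S))).const_mul
        (pfun hn S (conjU U A))))]
    have hterm : ∀ S ∈ (Finset.univ : Finset (Fin n)).powerset,
        ∫ B, pfun hn S (conjU U A) * pfun hn (Finset.univ \ S) B ∂ν
        = (if S = Finset.univ then pfun hn Finset.univ (conjU U A) else 0)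
          + (if S = (∅ : Finset (Fin n)) then ∫ B, pfun hn Finset.univ B ∂ν else 0) := by
      intro S _
      rw [integral_const_mul]
      by_cases hSu : S = Finset.univ
      · subst hSu
        rw [if_pos rfl, if_neg (by
          intro h
          exact (Finset.univ_nonempty (α := Fin n)).ne_empty h), Finset.sdiff_self]
        have : ∀ B : Matrix (Fin N) (Fin N) ℂ, pfun hn (∅ : Finset (Fin n)) B = 1 := by
          intro B; simp [pfun]
        simp only [this]
        rw [integral_const]
        simp [measure_univ]
      · by_cases hSe : S = ∅
        · subst hSe
          rw [if_neg hSu, if_pos rfl, Finset.sdiff_empty]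
          have : pfun hn (∅ : Finset (Fin n)) (conjU U A) = 1 := by simp [pfun]
          rw [this, one_mul, zero_add]
        · rw [if_neg hSu, if_neg hSe]
          have hne : (Finset.univ \ S).Nonempty := by
            rw [Finset.sdiff_nonempty]
            intro hsub
            exact hSu (Finset.eq_univ_iff_forall.mpr fun x => hsub (Finset.mem_univ x))
          have hpr : Finset.univ \ S ≠ Finset.univ := by
            intro h
            obtain ⟨x, hx⟩ := Finset.nonempty_iff_ne_empty.mpr hSe
            have hx2 : x ∈ Finset.univ \ S := by rw [h]; exact Finset.mem_univ x
            exact (Finset.mem_sdiff.mp hx2).2 hx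
          rw [vanish_s12 hn hν _ hne hpr, mul_zero]
          simp
    rw [Finset.sum_congr rfl hterm, Finset.sum_add_distrib,
      Finset.sum_ite_eq' _ (Finset.univ : Finset (Fin n))
        (fun _ => pfun hn Finset.univ (conjU U A)),
      Finset.sum_ite_eq' _ (∅ : Finset (Fin n))
        (fun _ => ∫ B, pfun hn Finset.univ B ∂ν),
      if_pos (Finset.mem_powerset_self _), if_pos (Finset.empty_mem_powerset _)]
  rw [show (fun U : UG N => ∫ B, pfun hn Finset.univ (conjU U A + conjU U B) ∂ν)
      = fun U : UG N => pfun hn Finset.univ (conjU U A) + ∫ B, pfun hn Finset.univ B ∂ν from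
    funext hinner]
  have hint1 : Integrable (fun U : UG N => pfun hn Finset.univ (conjU U A)) haarU :=
    integrable_of_cont_compact haarU isCompact_univ (by simp)
      (by exact (continuous_pfun hn _).comp (continuous_conjU_right A))
  rw [integral_add hint1 (integrable_const _)]
  rw [integral_const]
  rw [mul_add, ← Kcum_eq hn haarU A]
  simp [measure_univ]

/-- Additivity of the averaged precursor `K_n` with respect to additive
convolution of unitarily invariant, compactly supported Borel probability measures:
`∫∫ K_n(A + B) dμ(A) dν(B) = ∫ K_n dμ + ∫ K_n dν`. -/
theorem statement12 (N n : ℕ) (h1 : 1 ≤ n) (hn : n ≤ N) (haarU : Measure (UG N))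
    [IsProbabilityMeasure haarU] [Measure.IsMulLeftInvariant haarU]
    (μ ν : Measure (Matrix (Fin N) (Fin N) ℂ))
    [IsProbabilityMeasure μ] [IsProbabilityMeasure ν]
    (hμ : ∀ U : UG N, Measure.map (fun M => conjU U M) μ = μ)
    (hν : ∀ U : UG N, Measure.map (fun M => conjU U M) ν = ν)
    (hμc : ∃ s : Set (Matrix (Fin N) (Fin N) ℂ), IsCompact s ∧ μ sᶜ = 0)
    (hνc : ∃ s : Set (Matrix (Fin N) (Fin N) ℂ), IsCompact s ∧ ν sᶜ = 0) :
    (∫ A, ∫ B, Kcum haarU n (A + B) ∂ν ∂μ) =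
      (∫ A, Kcum haarU n A ∂μ) + ∫ B, Kcum haarU n B ∂ν := by
  obtain ⟨sμ, hsμ, hsμ0⟩ := hμc
  obtain ⟨sν, hsν, hsν0⟩ := hνc
  have hconv := conv_eq h1 hn haarU ν hν hsν hsν0
  simp only [hconv]
  have hprodint : Integrable
      (fun q : Matrix (Fin N) (Fin N) ℂ × UG N => pfun hn Finset.univ (conjU q.2 q.1))
      (μ.prod haarU) :=
    integrable_prod_UG haarU μ hsμ hsμ0 (continuous_pfun_comp hn _ continuous_conjU_pair)
  have hKint : Integrable (fun A => Kcum haarU n A) μ :=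
    ((hprodint.integral_prod_left).const_mul ((N:ℂ)^(n-1))).congr
      (Filter.Eventually.of_forall fun A => (Kcum_eq hn haarU A).symm)
  rw [integral_add hKint (integrable_const _), integral_const]
  rw [avg_eq hn haarU ν hν hsν hsν0]
  simp [measure_univ]
end

section
/- Let N ≥ 2 and let A, B be N×N complex matrices with Tr A = Tr B = 0. With K_2^{(N)}(X) := (N·Tr(X²) − (Tr X)²)/(N²−1), the variance of the additivity defect of K_2 over a random conjugacy orbit is ∫_{U(N)} ( K_2^{(N)}(A + U B U*) − K_2^{(N)}(A) − K_2^{(N)}(B) )² dU = 4 N² · Tr(A²) · Tr(B²) / (N²−1)³. -/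
open MeasureTheory Matrix

/-- The degree-2 free cumulant precursor, by its explicit trace formula:
`K_2(X) = (N Tr(X²) - (Tr X)²) / (N² - 1)`. -/
noncomputable def K2exp (N : ℕ) (X : Matrix (Fin N) (Fin N) ℂ) : ℂ :=
  ((N : ℂ) * (X ^ 2).trace - X.trace ^ 2) / ((N : ℂ) ^ 2 - 1)

namespace St13

variable {N : ℕ}

lemma conjU_continuous (B : Matrix (Fin N) (Fin N) ℂ) (i j : Fin N) :
    Continuous fun U : UG N => conjU U B i j := by
  have h1 : Continuous fun U : UG N => (U : Matrix (Fin N) (Fin N) ℂ) :=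
    continuous_subtype_val
  have h2 : Continuous fun U : UG N =>
      ((U : Matrix (Fin N) (Fin N) ℂ) * B * star (U : Matrix (Fin N) (Fin N) ℂ)) := by
    simpa [Matrix.star_eq_conjTranspose] using
      (h1.matrix_mul continuous_const).matrix_mul h1.matrix_conjTranspose
  exact h2.matrix_elem i j

lemma conjU_entry_eq (U : UG N) (B : Matrix (Fin N) (Fin N) ℂ) (i j : Fin N) :
    conjU U B i j = ∑ t : Fin N, ∑ s : Fin N,
      (U : Matrix (Fin N) (Fin N) ℂ) i s * B s t *
        star ((U : Matrix (Fin N) (Fin N) ℂ) j t) := by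
  simp [conjU, Matrix.mul_apply, Matrix.star_apply, Finset.sum_mul]

/-- entrywise bound -/
noncomputable def Cb (B : Matrix (Fin N) (Fin N) ℂ) : ℝ :=
  ∑ t : Fin N, ∑ s : Fin N, ‖B s t‖

lemma conjU_entry_bound (U : UG N) (B : Matrix (Fin N) (Fin N) ℂ) (i j : Fin N) :
    ‖conjU U B i j‖ ≤ Cb B := by
  rw [conjU_entry_eq]
  refine (norm_sum_le _ _).trans ?_
  unfold Cb
  refine Finset.sum_le_sum fun t _ => ?_
  refine (norm_sum_le _ _).trans ?_
  refine Finset.sum_le_sum fun s _ => ?_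
  have hU1 : ‖(U : Matrix (Fin N) (Fin N) ℂ) i s‖ ≤ 1 :=
    entry_norm_bound_of_unitary U.2 i s
  have hU2 : ‖star ((U : Matrix (Fin N) (Fin N) ℂ) j t)‖ ≤ 1 := by
    rw [norm_star]; exact entry_norm_bound_of_unitary U.2 j t
  calc ‖(U : Matrix (Fin N) (Fin N) ℂ) i s * B s t * star ((U : Matrix (Fin N) (Fin N) ℂ) j t)‖
      = ‖(U : Matrix (Fin N) (Fin N) ℂ) i s‖ * ‖B s t‖ * ‖star ((U : Matrix (Fin N) (Fin N) ℂ) j t)‖ := by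
        simp [norm_mul]
    _ ≤ 1 * ‖B s t‖ * 1 := by
        gcongr
    _ = ‖B s t‖ := by ring

variable (μ : Measure (UG N)) [IsProbabilityMeasure μ]

lemma integrable_entry (B : Matrix (Fin N) (Fin N) ℂ) (i j : Fin N) :
    Integrable (fun U : UG N => conjU U B i j) μ := by
  refine Integrable.mono' (integrable_const (Cb B)) ?_ ?_
  · exact (conjU_continuous B i j).aestronglyMeasurable
  · exact Filter.Eventually.of_forall fun U => conjU_entry_bound U B i j

lemma integrable_pair (B : Matrix (Fin N) (Fin N) ℂ) (i j k l : Fin N) :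
    Integrable (fun U : UG N => conjU U B i j * conjU U B k l) μ := by
  refine Integrable.mono' (integrable_const (Cb B * Cb B)) ?_ ?_
  · exact ((conjU_continuous B i j).mul (conjU_continuous B k l)).aestronglyMeasurable
  · refine Filter.Eventually.of_forall fun U => ?_
    rw [norm_mul]
    have h0 : (0:ℝ) ≤ Cb B := le_trans (norm_nonneg _) (conjU_entry_bound U B i j)
    exact mul_le_mul (conjU_entry_bound U B i j) (conjU_entry_bound U B k l) (norm_nonneg _) h0

variable [μ.IsMulLeftInvariant]

set_option maxHeartbeats 1000000 in
lemma integral_conjU_invariant (B : Matrix (Fin N) (Fin N) ℂ)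
    (F : Matrix (Fin N) (Fin N) ℂ → ℂ) (V : UG N) :
    ∫ U, F (conjU U B) ∂μ
      = ∫ U, F ((V : Matrix (Fin N) (Fin N) ℂ) * conjU U B *
          star (V : Matrix (Fin N) (Fin N) ℂ)) ∂μ := by
  rw [← integral_mul_left_eq_self (μ := μ) (fun U : UG N => F (conjU U B)) V]
  refine integral_congr_ae (Filter.Eventually.of_forall fun U => ?_)
  have : conjU (V * U) B = (V : Matrix (Fin N) (Fin N) ℂ) * conjU U B *
      star (V : Matrix (Fin N) (Fin N) ℂ) := by
    simp only [conjU, Matrix.UnitaryGroup.mul_val, Matrix.star_mul]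
    noncomm_ring
  simp only [this]


noncomputable def TT (B : Matrix (Fin N) (Fin N) ℂ) (i j k l : Fin N) : ℂ :=
  ∫ U, conjU U B i j * conjU U B k l ∂μ

noncomputable def SS (C : Matrix (Fin N) (Fin N) ℂ) (i j : Fin N) : ℂ :=
  ∫ U, conjU U C i j ∂μ

/-- phase function -/
noncomputable def ph (m t : Fin N) : ℂ := if t = m then Complex.I else 1

lemma ph_diag (m : Fin N) :
    Matrix.diagonal (ph m) ∈ Matrix.unitaryGroup (Fin N) ℂ := by
  rw [Matrix.mem_unitaryGroup_iff]
  rw [Matrix.star_eq_conjTranspose, Matrix.diagonal_conjTranspose]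
  rw [Matrix.diagonal_mul_diagonal]
  have : (fun t => ph m t * star (ph m) t) = fun _ => (1:ℂ) := by
    funext t
    by_cases h : t = m <;>
      simp [ph, h, Complex.star_def, Complex.conj_I, Complex.I_mul_I]
  rw [this, Matrix.diagonal_one]

lemma TT_phase (B : Matrix (Fin N) (Fin N) ℂ) (m i j k l : Fin N) :
    TT μ B i j k l
      = (ph m i * star (ph m j) * (ph m k * star (ph m l))) * TT μ B i j k l := by
  have h := integral_conjU_invariant μ B (fun X => X i j * X k l) ⟨_, ph_diag m⟩
  unfold TT
  conv_lhs => rw [h]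
  rw [← MeasureTheory.integral_const_mul]
  refine integral_congr_ae (Filter.Eventually.of_forall fun U => ?_)
  simp only [Matrix.star_eq_conjTranspose, Matrix.diagonal_conjTranspose]
  simp only [Matrix.diagonal_mul, Matrix.mul_diagonal, Pi.star_apply]
  ring

lemma cancel_ne_one {z t : ℂ} (hz : z ≠ 1) (h : t = z * t) : t = 0 := by
  have h2 : (1 - z) * t = 0 := by linear_combination h
  rcases mul_eq_zero.mp h2 with h3 | h3
  · exact absurd (by linear_combination -h3) hz
  · exact h3

lemma I_ne_one : (Complex.I : ℂ) ≠ 1 := by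
  intro h
  simpa using congrArg Complex.im h

lemma neg_I_ne_one : (-Complex.I : ℂ) ≠ 1 := by
  intro h
  simpa using congrArg Complex.im h

lemma neg_one_ne_one : (-1 : ℂ) ≠ 1 := by norm_num

lemma TT_vanish (B : Matrix (Fin N) (Fin N) ℂ) {i j k l : Fin N}
    (h : ¬((i = j ∧ k = l) ∨ (i = l ∧ j = k))) : TT μ B i j k l = 0 := by
  by_cases hij : i = j
  · have hkl : k ≠ l := fun h' => h (Or.inl ⟨hij, h'⟩)
    have hlk : l ≠ k := fun h' => hkl h'.symm
    have hph := TT_phase μ B k i j k l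
    subst hij
    by_cases hik : i = k
    · subst hik
      simp only [ph, if_pos rfl, if_neg hlk] at hph
      refine cancel_ne_one I_ne_one ?_
      calc TT μ B i i i l = (Complex.I * star Complex.I * (Complex.I * star 1)) * TT μ B i i i l := hph
        _ = Complex.I * TT μ B i i i l := by simp [Complex.star_def, Complex.conj_I]
    · simp only [ph, if_neg hik, if_pos rfl, if_neg hlk] at hph
      refine cancel_ne_one I_ne_one ?_
      calc TT μ B i i k l = (1 * star (1:ℂ) * (Complex.I * star (1:ℂ))) * TT μ B i i k l := hph
        _ = Complex.I * TT μ B i i k l := by simp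
  · by_cases hil : i = l
    · have hjk : j ≠ k := fun h' => h (Or.inr ⟨hil, h'⟩)
      have hph := TT_phase μ B j i j k l
      have hlj : l ≠ j := fun h' => hij (by rw [hil, h'])
      have hkj : k ≠ j := fun h' => hjk h'.symm
      simp only [ph, if_neg hij, if_pos rfl, if_neg hkj, if_neg hlj] at hph
      refine cancel_ne_one neg_I_ne_one ?_
      calc TT μ B i j k l = (1 * star Complex.I * ((1:ℂ) * star (1:ℂ))) * TT μ B i j k l := hph
        _ = -Complex.I * TT μ B i j k l := by simp [Complex.star_def, Complex.conj_I]
    · have hph := TT_phase μ B i i j k l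
      have hji : j ≠ i := fun h' => hij h'.symm
      have hli : l ≠ i := fun h' => hil h'.symm
      by_cases hki : k = i
      · simp only [ph, if_pos rfl, if_neg hji, if_pos hki, if_neg hli] at hph
        refine cancel_ne_one neg_one_ne_one ?_
        calc TT μ B i j k l = (Complex.I * star (1:ℂ) * (Complex.I * star (1:ℂ))) * TT μ B i j k l := hph
          _ = -1 * TT μ B i j k l := by simp [Complex.I_mul_I]
      · simp only [ph, if_pos rfl, if_neg hji, if_neg hki, if_neg hli] at hph
        refine cancel_ne_one I_ne_one ?_
        calc TT μ B i j k l = (Complex.I * star (1:ℂ) * ((1:ℂ) * star (1:ℂ))) * TT μ B i j k l := hph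
          _ = Complex.I * TT μ B i j k l := by simp


lemma star_permM (σ : Equiv.Perm (Fin N)) :
    star (σ.toPEquiv.toMatrix : Matrix (Fin N) (Fin N) ℂ) = (σ⁻¹).toPEquiv.toMatrix := by
  ext s t
  simp only [Matrix.star_apply, PEquiv.toMatrix_toPEquiv_apply, Pi.single_apply, eq_comm (a := s), eq_comm (a := t)]
  have hiff : σ t = s ↔ σ⁻¹ s = t := by
    constructor
    · rintro rfl; simp
    · rintro rfl; simp
  simp only [Matrix.one_apply, apply_ite (star : ℂ → ℂ), star_one, star_zero, hiff]

lemma permM_mem (σ : Equiv.Perm (Fin N)) :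
    (σ.toPEquiv.toMatrix : Matrix (Fin N) (Fin N) ℂ) ∈ Matrix.unitaryGroup (Fin N) ℂ := by
  rw [Matrix.mem_unitaryGroup_iff, star_permM, ← PEquiv.toMatrix_trans,
    ← Equiv.toPEquiv_trans]
  show ((σ.trans σ⁻¹).toPEquiv.toMatrix : Matrix (Fin N) (Fin N) ℂ) = 1
  rw [show σ.trans σ⁻¹ = Equiv.refl (Fin N) from Equiv.self_trans_symm σ,
    Equiv.toPEquiv_refl, PEquiv.toMatrix_refl]

lemma permM_conj (σ : Equiv.Perm (Fin N)) (X : Matrix (Fin N) (Fin N) ℂ) :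
    (σ.toPEquiv.toMatrix : Matrix (Fin N) (Fin N) ℂ) * X *
      star (σ.toPEquiv.toMatrix : Matrix (Fin N) (Fin N) ℂ) = X.submatrix σ σ := by
  rw [star_permM, PEquiv.toMatrix_toPEquiv_mul, PEquiv.mul_toMatrix_toPEquiv]
  ext s t
  simp [Equiv.Perm.inv_def]

lemma TT_perm (B : Matrix (Fin N) (Fin N) ℂ) (σ : Equiv.Perm (Fin N)) (i j k l : Fin N) :
    TT μ B i j k l = TT μ B (σ i) (σ j) (σ k) (σ l) := by
  have h := integral_conjU_invariant μ B (fun X => X i j * X k l)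
    ⟨_, permM_mem σ⟩
  unfold TT
  rw [show (∫ U, conjU U B i j * conjU U B k l ∂μ) =
    ∫ U, (fun X => X i j * X k l) (conjU U B) ∂μ from rfl, h]
  refine integral_congr_ae (Filter.Eventually.of_forall fun U => ?_)
  simp only [permM_conj, Matrix.submatrix_apply]

lemma SS_perm (C : Matrix (Fin N) (Fin N) ℂ) (σ : Equiv.Perm (Fin N)) (i j : Fin N) :
    SS μ C i j = SS μ C (σ i) (σ j) := by
  have h := integral_conjU_invariant μ C (fun X => X i j) ⟨_, permM_mem σ⟩
  unfold SS
  rw [show (∫ U, conjU U C i j ∂μ) =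
    ∫ U, (fun X => X i j) (conjU U C) ∂μ from rfl, h]
  refine integral_congr_ae (Filter.Eventually.of_forall fun U => ?_)
  simp only [permM_conj, Matrix.submatrix_apply]

lemma SS_phase (C : Matrix (Fin N) (Fin N) ℂ) (m i j : Fin N) :
    SS μ C i j = (ph m i * star (ph m j)) * SS μ C i j := by
  have h := integral_conjU_invariant μ C (fun X => X i j) ⟨_, ph_diag m⟩
  unfold SS
  conv_lhs => rw [h]
  rw [← MeasureTheory.integral_const_mul]
  refine integral_congr_ae (Filter.Eventually.of_forall fun U => ?_)
  simp only [Matrix.star_eq_conjTranspose, Matrix.diagonal_conjTranspose]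
  simp only [Matrix.diagonal_mul, Matrix.mul_diagonal, Pi.star_apply]
  ring

lemma SS_offdiag (C : Matrix (Fin N) (Fin N) ℂ) {i j : Fin N} (h : i ≠ j) :
    SS μ C i j = 0 := by
  have hph := SS_phase μ C i i j
  have hji : j ≠ i := fun h' => h h'.symm
  simp only [ph, if_pos rfl, if_neg hji] at hph
  refine cancel_ne_one I_ne_one ?_
  calc SS μ C i j = (Complex.I * star (1:ℂ)) * SS μ C i j := hph
    _ = Complex.I * SS μ C i j := by simp

lemma trace_conjU (U : UG N) (C : Matrix (Fin N) (Fin N) ℂ) :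
    (conjU U C).trace = C.trace := by
  unfold conjU
  rw [Matrix.trace_mul_cycle, Matrix.UnitaryGroup.star_mul_self, Matrix.one_mul]

lemma conjU_mul (U : UG N) (X Y : Matrix (Fin N) (Fin N) ℂ) :
    conjU U X * conjU U Y = conjU U (X * Y) := by
  have h : star (U : Matrix (Fin N) (Fin N) ℂ) * (U : Matrix (Fin N) (Fin N) ℂ) = 1 :=
    Matrix.UnitaryGroup.star_mul_self U
  simp only [conjU, Matrix.mul_assoc]
  rw [← Matrix.mul_assoc (star (U : Matrix (Fin N) (Fin N) ℂ)) (U : Matrix (Fin N) (Fin N) ℂ), h,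
    Matrix.one_mul]

lemma exists_perm_pair {a b i k : Fin N} (hab : a ≠ b) (hik : i ≠ k) :
    ∃ σ : Equiv.Perm (Fin N), σ a = i ∧ σ b = k := by
  have hτb : Equiv.swap a i b ≠ i := by
    by_cases hbi : b = i
    · rw [hbi, Equiv.swap_apply_right]
      rw [hbi] at hab
      exact hab
    · rw [Equiv.swap_apply_of_ne_of_ne (fun h => hab h.symm) hbi]
      exact hbi
  refine ⟨(Equiv.swap a i).trans (Equiv.swap (Equiv.swap a i b) k), ?_, ?_⟩
  · simp only [Equiv.trans_apply, Equiv.swap_apply_left]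
    exact Equiv.swap_apply_of_ne_of_ne (fun h => hτb h.symm) hik
  · simp only [Equiv.trans_apply, Equiv.swap_apply_left]

lemma SS_trace_sum (C : Matrix (Fin N) (Fin N) ℂ) :
    ∑ i : Fin N, SS μ C i i = C.trace := by
  unfold SS
  rw [← MeasureTheory.integral_finset_sum _ (fun i _ => integrable_entry μ C i i)]
  have : ∀ U : UG N, (∑ i : Fin N, conjU U C i i) = C.trace := by
    intro U
    rw [← trace_conjU U C]
    rfl
  simp only [this]
  simp

lemma SS_diag (hN : (N:ℂ) ≠ 0) (C : Matrix (Fin N) (Fin N) ℂ) (i : Fin N) :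
    SS μ C i i = C.trace / (N:ℂ) := by
  have hall : ∀ i' : Fin N, SS μ C i' i' = SS μ C i i := by
    intro i'
    have := SS_perm μ C (Equiv.swap i' i) i' i'
    simpa using this
  have hsum := SS_trace_sum μ C
  rw [Finset.sum_congr rfl (fun i' _ => hall i')] at hsum
  rw [Finset.sum_const, Finset.card_univ, Fintype.card_fin, nsmul_eq_mul] at hsum
  rw [eq_div_iff hN]
  linear_combination hsum


noncomputable def rc : ℂ := ((Real.sqrt 2)⁻¹ : ℝ)

lemma rc_mul_self : rc * rc = 1/2 := by
  unfold rc
  rw [← Complex.ofReal_mul, ← mul_inv, Real.mul_self_sqrt (by norm_num : (0:ℝ) ≤ 2)]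
  norm_num

noncomputable def Hm (a b : Fin N) : Matrix (Fin N) (Fin N) ℂ :=
  Matrix.of fun s t =>
    if s = a then (if t = a then rc else if t = b then rc else 0)
    else if s = b then (if t = a then rc else if t = b then -rc else 0)
    else if t = s then 1 else 0

lemma Hm_star {a b : Fin N} (hab : a ≠ b) : star (Hm a b) = Hm a b := by
  ext s t
  rw [Matrix.star_apply]
  by_cases hsa : s = a <;> by_cases hsb : s = b <;> by_cases hta : t = a <;>
    by_cases htb : t = b <;> by_cases hts : t = s <;>
    simp_all [Hm, Complex.conj_ofReal, rc, eq_comm]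

lemma row_sum_a {a b : Fin N} (hab : a ≠ b) (f : Fin N → ℂ) :
    ∑ u : Fin N, (if u = a then rc else if u = b then rc else 0) * f u
      = rc * f a + rc * f b := by
  have : ∀ u : Fin N, (if u = a then rc else if u = b then rc else 0) * f u
      = (if u = a then rc * f u else 0) + (if u = b then rc * f u else 0) := by
    intro u
    by_cases hua : u = a <;> by_cases hub : u = b <;> simp_all
  simp_rw [this]
  rw [Finset.sum_add_distrib, Finset.sum_ite_eq' Finset.univ a (fun u => rc * f u),
    Finset.sum_ite_eq' Finset.univ b (fun u => rc * f u)]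
  simp

lemma row_sum_b {a b : Fin N} (hab : a ≠ b) (f : Fin N → ℂ) :
    ∑ u : Fin N, (if u = a then rc else if u = b then -rc else 0) * f u
      = rc * f a - rc * f b := by
  have : ∀ u : Fin N, (if u = a then rc else if u = b then -rc else 0) * f u
      = (if u = a then rc * f u else 0) + (if u = b then -(rc * f u) else 0) := by
    intro u
    by_cases hua : u = a <;> by_cases hub : u = b <;> simp_all
  simp_rw [this]
  rw [Finset.sum_add_distrib, Finset.sum_ite_eq' Finset.univ a (fun u => rc * f u)]
  rw [show (∑ u : Fin N, if u = b then -(rc * f u) else 0)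
      = ∑ u : Fin N, if u = b then (fun u => -(rc * f u)) u else 0 from rfl]
  rw [Finset.sum_ite_eq' Finset.univ b (fun u => -(rc * f u))]
  simp
  ring

lemma row_sum_id {s : Fin N} (f : Fin N → ℂ) :
    ∑ u : Fin N, (if u = s then (1:ℂ) else 0) * f u = f s := by
  have : ∀ u : Fin N, (if u = s then (1:ℂ) else 0) * f u
      = (if u = s then f u else 0) := by
    intro u; by_cases hus : u = s <;> simp_all
  simp_rw [this]
  rw [Finset.sum_ite_eq' Finset.univ s f]
  simp

lemma Hm_mul_self {a b : Fin N} (hab : a ≠ b) : Hm a b * Hm a b = 1 := by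
  have hba : b ≠ a := fun h => hab h.symm
  have hrowa : ∀ u, Hm a b a u = (if u = a then rc else if u = b then rc else 0) := by
    intro u; simp [Hm]
  have hrowb : ∀ u, Hm a b b u = (if u = a then rc else if u = b then -rc else 0) := by
    intro u; simp [Hm, hba]
  have hrowo : ∀ s, s ≠ a → s ≠ b → ∀ u, Hm a b s u = (if u = s then (1:ℂ) else 0) := by
    intro s h1 h2 u; simp [Hm, h1, h2]
  ext s t
  rw [Matrix.mul_apply]
  by_cases hsa : s = a
  · rw [hsa]
    simp_rw [hrowa]
    rw [row_sum_a hab (fun u => Hm a b u t)]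
    by_cases hta : t = a
    · rw [hta]
      rw [show Hm a b a a = rc from by rw [hrowa]; simp,
        show Hm a b b a = rc from by rw [hrowb]; simp,
        Matrix.one_apply_eq]
      linear_combination 2 * rc_mul_self
    · by_cases htb : t = b
      · rw [htb]
        rw [show Hm a b a b = rc from by rw [hrowa]; simp [hba],
          show Hm a b b b = -rc from by rw [hrowb]; simp [hba],
          Matrix.one_apply_ne hab]
        ring
      · rw [show Hm a b a t = 0 from by rw [hrowa]; simp [hta, htb],
          show Hm a b b t = 0 from by rw [hrowb]; simp [hta, htb],
          Matrix.one_apply_ne (fun h => hta h.symm)]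
        ring
  · by_cases hsb : s = b
    · rw [hsb]
      simp_rw [hrowb]
      rw [row_sum_b hab (fun u => Hm a b u t)]
      by_cases hta : t = a
      · rw [hta]
        rw [show Hm a b a a = rc from by rw [hrowa]; simp,
          show Hm a b b a = rc from by rw [hrowb]; simp,
          Matrix.one_apply_ne hba]
        ring
      · by_cases htb : t = b
        · rw [htb]
          rw [show Hm a b a b = rc from by rw [hrowa]; simp [hba],
            show Hm a b b b = -rc from by rw [hrowb]; simp [hba],
            Matrix.one_apply_eq]
          linear_combination 2 * rc_mul_self
        · rw [show Hm a b a t = 0 from by rw [hrowa]; simp [hta, htb],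
            show Hm a b b t = 0 from by rw [hrowb]; simp [hta, htb],
            Matrix.one_apply_ne (fun h => htb h.symm)]
          ring
    · simp_rw [hrowo s hsa hsb]
      rw [row_sum_id (fun u => Hm a b u t)]
      rw [hrowo s hsa hsb t]
      by_cases hts : t = s
      · rw [if_pos hts, hts, Matrix.one_apply_eq]
      · rw [if_neg hts, Matrix.one_apply_ne (fun h => hts h.symm)]

lemma Hm_mem {a b : Fin N} (hab : a ≠ b) :
    Hm a b ∈ Matrix.unitaryGroup (Fin N) ℂ := by
  rw [Matrix.mem_unitaryGroup_iff, Hm_star hab, Hm_mul_self hab]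

lemma Hm_conj_entry {a b : Fin N} (hab : a ≠ b) (X : Matrix (Fin N) (Fin N) ℂ) :
    (Hm a b * X * star (Hm a b)) a a
      = (1/2) * X a a + (1/2) * X a b + (1/2) * X b a + (1/2) * X b b := by
  have hba : b ≠ a := fun h => hab h.symm
  rw [Hm_star hab]
  have hrowa : ∀ u, Hm a b a u = (if u = a then rc else if u = b then rc else 0) := by
    intro u; simp [Hm]
  have hcola : ∀ u, Hm a b u a = (if u = a then rc else if u = b then rc else 0) := by
    intro u
    by_cases hua : u = a
    · subst hua; simp [Hm]
    · by_cases hub : u = b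
      · subst hub; simp [Hm, hba]
      · simp [Hm, hua, hub, Ne.symm hua]
  have hrow : ∀ t, (Hm a b * X) a t = rc * X a t + rc * X b t := by
    intro t
    rw [Matrix.mul_apply]
    simp_rw [hrowa]
    rw [row_sum_a hab (fun u => X u t)]
  have hcol : (Hm a b * X * Hm a b) a a
      = rc * (Hm a b * X) a a + rc * (Hm a b * X) a b := by
    rw [Matrix.mul_apply]
    have h2 : ∀ u, (Hm a b * X) a u * Hm a b u a
        = (if u = a then rc else if u = b then rc else 0) * (Hm a b * X) a u := by
      intro u; rw [hcola u]; ring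
    simp_rw [h2]
    rw [row_sum_a hab (fun u => (Hm a b * X) a u)]
  rw [hcol, hrow, hrow]
  linear_combination (X a a + X a b + X b a + X b b) * rc_mul_self

lemma integral_sq_sum {ι : Type} [Fintype ι] (B : Matrix (Fin N) (Fin N) ℂ)
    (c : ι → ℂ) (av bv : ι → Fin N) :
    ∫ U, ((∑ x : ι, c x * conjU U B (av x) (bv x)) *
          (∑ x : ι, c x * conjU U B (av x) (bv x))) ∂μ
      = ∑ x : ι, ∑ y : ι, c x * c y * TT μ B (av x) (bv x) (av y) (bv y) := by
  have hpt : ∀ U : UG N,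
      (∑ x : ι, c x * conjU U B (av x) (bv x)) * (∑ x : ι, c x * conjU U B (av x) (bv x))
        = ∑ x : ι, ∑ y : ι,
            c x * c y * (conjU U B (av x) (bv x) * conjU U B (av y) (bv y)) := by
    intro U
    rw [Finset.sum_mul_sum]
    exact Finset.sum_congr rfl fun x _ => Finset.sum_congr rfl fun y _ => by ring
  simp_rw [hpt]
  rw [MeasureTheory.integral_finset_sum _ (fun x _ =>
    integrable_finset_sum _ (fun y _ => ((integrable_pair μ B _ _ _ _).const_mul _)))]
  refine Finset.sum_congr rfl fun x _ => ?_
  rw [MeasureTheory.integral_finset_sum _ (fun y _ => ((integrable_pair μ B _ _ _ _).const_mul _))]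
  refine Finset.sum_congr rfl fun y _ => ?_
  rw [MeasureTheory.integral_const_mul]
  rfl

lemma sum_TT_diag (B : Matrix (Fin N) (Fin N) ℂ) (hB : B.trace = 0) (a : Fin N) :
    ∑ k : Fin N, TT μ B a a k k = 0 := by
  unfold TT
  rw [← MeasureTheory.integral_finset_sum _ (fun k _ => integrable_pair μ B a a k k)]
  have : ∀ U : UG N, (∑ k : Fin N, conjU U B a a * conjU U B k k) = 0 := by
    intro U
    rw [← Finset.mul_sum]
    have : (∑ k : Fin N, conjU U B k k) = (conjU U B).trace := rfl
    rw [this, trace_conjU, hB, mul_zero]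
  simp only [this]
  simp

lemma sum_TT_cross (hN0 : (N:ℂ) ≠ 0) (B : Matrix (Fin N) (Fin N) ℂ) (a : Fin N) :
    ∑ k : Fin N, TT μ B a k k a = (B * B).trace / (N:ℂ) := by
  unfold TT
  rw [← MeasureTheory.integral_finset_sum _ (fun k _ => integrable_pair μ B a k k a)]
  have hpt : ∀ U : UG N, (∑ k : Fin N, conjU U B a k * conjU U B k a)
      = conjU U (B * B) a a := by
    intro U
    rw [← conjU_mul, Matrix.mul_apply]
  simp_rw [hpt]
  exact SS_diag μ hN0 (B * B) a

lemma defect_eq (hden : ((N:ℂ)^2 - 1) ≠ 0) (A B : Matrix (Fin N) (Fin N) ℂ)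
    (hA : A.trace = 0) (hB : B.trace = 0) (U : UG N) :
    K2exp N (A + conjU U B) - K2exp N A - K2exp N B
      = 2 * (N:ℂ) / ((N:ℂ)^2 - 1) * (A * conjU U B).trace := by
  have h1 : (conjU U B).trace = 0 := by rw [trace_conjU]; exact hB
  have h2 : ((A + conjU U B)^2).trace
      = (A^2).trace + 2*(A * conjU U B).trace + (B^2).trace := by
    have e1 : (A + conjU U B)^2
        = A*A + A*conjU U B + conjU U B * A + conjU U B * conjU U B := by
      rw [pow_two]; noncomm_ring
    rw [e1, Matrix.trace_add, Matrix.trace_add, Matrix.trace_add, conjU_mul, trace_conjU,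
      Matrix.trace_mul_comm (conjU U B) A, pow_two, pow_two]
    ring
  unfold K2exp
  rw [h2, Matrix.trace_add, h1, hA, hB]
  field_simp
  ring

lemma kron_sum (A : Matrix (Fin N) (Fin N) ℂ) (a b : Fin N) :
    ∑ y : Fin N × Fin N, A y.1 y.2 *
      ((if a = y.1 then (1:ℂ) else 0) * (if b = y.2 then (1:ℂ) else 0)) = A a b := by
  rw [Fintype.sum_prod_type]
  simp [mul_ite, mul_zero, mul_one, ite_mul, zero_mul, one_mul, Finset.sum_ite_eq]

lemma diag_sum (A : Matrix (Fin N) (Fin N) ℂ) :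
    ∑ y : Fin N × Fin N, A y.1 y.2 * (if y.2 = y.1 then (1:ℂ) else 0) = A.trace := by
  rw [Fintype.sum_prod_type]
  simp [Matrix.trace, Matrix.diag, mul_ite, mul_zero, mul_one, Finset.sum_ite_eq']

lemma trA2_sum (A : Matrix (Fin N) (Fin N) ℂ) :
    ∑ x : Fin N × Fin N, A x.1 x.2 * A x.2 x.1 = (A * A).trace := by
  rw [Fintype.sum_prod_type]
  simp [Matrix.trace, Matrix.diag, Matrix.mul_apply]

end St13

open St13

/-- Variance of the additivity defect of `K_2` for traceless `A, B`:
`∫_{U(N)} (K_2(A + U B U⋆) - K_2(A) - K_2(B))² dU = 4 N² Tr(A²) Tr(B²) / (N²-1)³`. -/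
theorem statement13 (N : ℕ) (hN : 2 ≤ N) (haarU : Measure (UG N))
    [IsProbabilityMeasure haarU] [Measure.IsMulLeftInvariant haarU]
    (A B : Matrix (Fin N) (Fin N) ℂ) (hA : A.trace = 0) (hB : B.trace = 0) :
    (∫ U, (K2exp N (A + conjU U B) - K2exp N A - K2exp N B) ^ 2 ∂haarU) =
      4 * (N : ℂ) ^ 2 * (A ^ 2).trace * (B ^ 2).trace / ((N : ℂ) ^ 2 - 1) ^ 3 := by
  have hN0 : (N:ℂ) ≠ 0 := Nat.cast_ne_zero.mpr (by omega)
  have hNm : (N:ℂ) - 1 ≠ 0 := sub_ne_zero.mpr (by exact_mod_cast (by omega : N ≠ 1))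
  have hNp : (N:ℂ) + 1 ≠ 0 := by
    have h : ((N+1 : ℕ) : ℂ) ≠ 0 := Nat.cast_ne_zero.mpr (by omega)
    push_cast at h; exact h
  have hden : ((N:ℂ)^2 - 1) ≠ 0 := by
    have h : (N:ℂ)^2 - 1 = ((N:ℂ)-1) * ((N:ℂ)+1) := by ring
    rw [h]; exact mul_ne_zero hNm hNp
  have h0N : 0 < N := by omega
  have h1N : 1 < N := by omega
  set e0 : Fin N := ⟨0, h0N⟩ with he0
  set e1 : Fin N := ⟨1, h1N⟩ with he1
  have hne : e0 ≠ e1 := by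
    intro h
    have := congrArg Fin.val h
    simp [he0, he1] at this
  -- Relation 1
  have hR1 : TT haarU B e0 e0 e0 e0 + ((N:ℂ) - 1) * TT haarU B e0 e0 e1 e1 = 0 := by
    have hs := sum_TT_diag haarU B hB e0
    rw [← Finset.sum_erase_add _ _ (Finset.mem_univ e0)] at hs
    have hconst : ∀ k ∈ Finset.univ.erase e0,
        TT haarU B e0 e0 k k = TT haarU B e0 e0 e1 e1 := by
      intro k hk
      have hk0 : e0 ≠ k := fun h => (Finset.mem_erase.mp hk).1 h.symm
      obtain ⟨σ, h0, h1⟩ := exists_perm_pair hne hk0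
      have hp := TT_perm haarU B σ e0 e0 e1 e1
      rw [h0, h1] at hp
      exact hp.symm
    rw [Finset.sum_congr rfl hconst, Finset.sum_const,
      Finset.card_erase_of_mem (Finset.mem_univ e0), Finset.card_univ, Fintype.card_fin,
      nsmul_eq_mul, Nat.cast_sub (by omega : 1 ≤ N), Nat.cast_one] at hs
    linear_combination hs
  -- Relation 2
  have hR2 : (TT haarU B e0 e0 e0 e0 + ((N:ℂ) - 1) * TT haarU B e0 e1 e1 e0) * (N:ℂ)
      = (B * B).trace := by
    have hs := sum_TT_cross haarU hN0 B e0
    rw [← Finset.sum_erase_add _ _ (Finset.mem_univ e0)] at hs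
    have hconst : ∀ k ∈ Finset.univ.erase e0,
        TT haarU B e0 k k e0 = TT haarU B e0 e1 e1 e0 := by
      intro k hk
      have hk0 : e0 ≠ k := fun h => (Finset.mem_erase.mp hk).1 h.symm
      obtain ⟨σ, h0, h1⟩ := exists_perm_pair hne hk0
      have hp := TT_perm haarU B σ e0 e1 e1 e0
      rw [h0, h1] at hp
      exact hp.symm
    rw [Finset.sum_congr rfl hconst, Finset.sum_const,
      Finset.card_erase_of_mem (Finset.mem_univ e0), Finset.card_univ, Fintype.card_fin,
      nsmul_eq_mul, Nat.cast_sub (by omega : 1 ≤ N), Nat.cast_one] at hs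
    rw [eq_div_iff hN0] at hs
    linear_combination hs
  -- Relation 3 (Hadamard rotation)
  have hR3 : TT haarU B e0 e0 e0 e0
      = TT haarU B e0 e0 e1 e1 + TT haarU B e0 e1 e1 e0 := by
    have z1 : TT haarU B e0 e0 e0 e1 = 0 := TT_vanish haarU B (by
      rintro (⟨a1,a2⟩|⟨a1,a2⟩) <;>
        first | exact hne a1 | exact hne a2 | exact hne a1.symm | exact hne a2.symm)
    have z2 : TT haarU B e0 e0 e1 e0 = 0 := TT_vanish haarU B (by
      rintro (⟨a1,a2⟩|⟨a1,a2⟩) <;>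
        first | exact hne a1 | exact hne a2 | exact hne a1.symm | exact hne a2.symm)
    have z3 : TT haarU B e0 e1 e0 e0 = 0 := TT_vanish haarU B (by
      rintro (⟨a1,a2⟩|⟨a1,a2⟩) <;>
        first | exact hne a1 | exact hne a2 | exact hne a1.symm | exact hne a2.symm)
    have z4 : TT haarU B e0 e1 e0 e1 = 0 := TT_vanish haarU B (by
      rintro (⟨a1,a2⟩|⟨a1,a2⟩) <;>
        first | exact hne a1 | exact hne a2 | exact hne a1.symm | exact hne a2.symm)
    have z5 : TT haarU B e0 e1 e1 e1 = 0 := TT_vanish haarU B (by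
      rintro (⟨a1,a2⟩|⟨a1,a2⟩) <;>
        first | exact hne a1 | exact hne a2 | exact hne a1.symm | exact hne a2.symm)
    have z6 : TT haarU B e1 e0 e0 e0 = 0 := TT_vanish haarU B (by
      rintro (⟨a1,a2⟩|⟨a1,a2⟩) <;>
        first | exact hne a1 | exact hne a2 | exact hne a1.symm | exact hne a2.symm)
    have z7 : TT haarU B e1 e0 e1 e0 = 0 := TT_vanish haarU B (by
      rintro (⟨a1,a2⟩|⟨a1,a2⟩) <;>
        first | exact hne a1 | exact hne a2 | exact hne a1.symm | exact hne a2.symm)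
    have z8 : TT haarU B e1 e0 e1 e1 = 0 := TT_vanish haarU B (by
      rintro (⟨a1,a2⟩|⟨a1,a2⟩) <;>
        first | exact hne a1 | exact hne a2 | exact hne a1.symm | exact hne a2.symm)
    have z9 : TT haarU B e1 e1 e0 e1 = 0 := TT_vanish haarU B (by
      rintro (⟨a1,a2⟩|⟨a1,a2⟩) <;>
        first | exact hne a1 | exact hne a2 | exact hne a1.symm | exact hne a2.symm)
    have z10 : TT haarU B e1 e1 e1 e0 = 0 := TT_vanish haarU B (by
      rintro (⟨a1,a2⟩|⟨a1,a2⟩) <;>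
        first | exact hne a1 | exact hne a2 | exact hne a1.symm | exact hne a2.symm)
    have s1 : TT haarU B e1 e0 e0 e1 = TT haarU B e0 e1 e1 e0 := by
      have hp := TT_perm haarU B (Equiv.swap e0 e1) e0 e1 e1 e0
      rw [Equiv.swap_apply_left, Equiv.swap_apply_right] at hp
      exact hp.symm
    have s2 : TT haarU B e1 e1 e0 e0 = TT haarU B e0 e0 e1 e1 := by
      have hp := TT_perm haarU B (Equiv.swap e0 e1) e0 e0 e1 e1
      rw [Equiv.swap_apply_left, Equiv.swap_apply_right] at hp
      exact hp.symm
    have s3 : TT haarU B e1 e1 e1 e1 = TT haarU B e0 e0 e0 e0 := by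
      have hp := TT_perm haarU B (Equiv.swap e0 e1) e0 e0 e0 e0
      rw [Equiv.swap_apply_left] at hp
      exact hp.symm
    set v : Fin 2 → Fin N := ![e0, e1] with hv
    have hEq : TT haarU B e0 e0 e0 e0
        = (1/2) * TT haarU B e0 e0 e0 e0 + (1/2) * TT haarU B e0 e0 e1 e1
          + (1/2) * TT haarU B e0 e1 e1 e0 := by
      have hpt : ∀ U : UG N,
          (fun X : Matrix (Fin N) (Fin N) ℂ => X e0 e0 * X e0 e0)
            ((Hm e0 e1 : Matrix (Fin N) (Fin N) ℂ) * conjU U B * star (Hm e0 e1))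
          = (∑ x : Fin 2 × Fin 2, (1/2 : ℂ) * conjU U B (v x.1) (v x.2)) *
            (∑ x : Fin 2 × Fin 2, (1/2 : ℂ) * conjU U B (v x.1) (v x.2)) := by
        intro U
        have hsum4 : (∑ x : Fin 2 × Fin 2, (1/2:ℂ) * conjU U B (v x.1) (v x.2))
            = (1/2)*conjU U B e0 e0 + (1/2)*conjU U B e0 e1
              + (1/2)*conjU U B e1 e0 + (1/2)*conjU U B e1 e1 := by
          rw [Fintype.sum_prod_type, Fin.sum_univ_two, Fin.sum_univ_two, Fin.sum_univ_two]
          simp [hv]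
          ring
        simp only
        rw [Hm_conj_entry hne, hsum4]
      calc TT haarU B e0 e0 e0 e0
          = ∫ U, (fun X : Matrix (Fin N) (Fin N) ℂ => X e0 e0 * X e0 e0) (conjU U B) ∂haarU :=
            rfl
        _ = ∫ U, (fun X : Matrix (Fin N) (Fin N) ℂ => X e0 e0 * X e0 e0)
              ((Hm e0 e1 : Matrix (Fin N) (Fin N) ℂ) * conjU U B * star (Hm e0 e1)) ∂haarU :=
            by
              have h := integral_conjU_invariant haarU B
                (fun X : Matrix (Fin N) (Fin N) ℂ => X e0 e0 * X e0 e0)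
                ⟨Hm e0 e1, Hm_mem hne⟩
              have hcoe : ((⟨Hm e0 e1, Hm_mem hne⟩ : UG N) : Matrix (Fin N) (Fin N) ℂ)
                  = Hm e0 e1 := rfl
              rw [hcoe] at h
              exact h
        _ = ∫ U, ((∑ x : Fin 2 × Fin 2, (1/2 : ℂ) * conjU U B (v x.1) (v x.2)) *
              (∑ x : Fin 2 × Fin 2, (1/2 : ℂ) * conjU U B (v x.1) (v x.2))) ∂haarU :=
            integral_congr_ae (Filter.Eventually.of_forall hpt)
        _ = ∑ x : Fin 2 × Fin 2, ∑ y : Fin 2 × Fin 2,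
              (1/2:ℂ) * (1/2) * TT haarU B (v x.1) (v x.2) (v y.1) (v y.2) :=
            integral_sq_sum haarU B _ _ _
        _ = (1/2) * TT haarU B e0 e0 e0 e0 + (1/2) * TT haarU B e0 e0 e1 e1
              + (1/2) * TT haarU B e0 e1 e1 e0 := by
            rw [Fintype.sum_prod_type]
            simp only [Fin.sum_univ_two, Fintype.sum_prod_type]
            simp only [hv, Matrix.cons_val_zero, Matrix.cons_val_one, Matrix.head_cons]
            rw [z1, z2, z3, z4, z5, z6, z7, z8, z9, z10, s1, s2, s3]
            ring
    linear_combination 2 * hEq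
  -- value of q
  have hqq : ((N:ℂ)^2 - 1) * TT haarU B e0 e1 e1 e0 = (B * B).trace := by
    linear_combination (-1 : ℂ) * hR1 + hR2 + (-(N:ℂ)+1) * hR3
  -- the general formula for TT
  have hTTf : ∀ i j k l : Fin N, TT haarU B i j k l
      = TT haarU B e0 e1 e1 e0 * ((if i = l then (1:ℂ) else 0) * (if j = k then (1:ℂ) else 0))
        + TT haarU B e0 e0 e1 e1 * ((if i = j then (1:ℂ) else 0) * (if k = l then (1:ℂ) else 0)) := by
    intro i j k l
    by_cases h1 : i = j ∧ k = l
    · obtain ⟨hij, hkl⟩ := h1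
      rw [← hij, ← hkl]
      by_cases hik : i = k
      · rw [← hik]
        have hperm := TT_perm haarU B (Equiv.swap e0 i) e0 e0 e0 e0
        rw [Equiv.swap_apply_left] at hperm
        simp only [eq_self_iff_true, if_true]
        linear_combination hR3 - hperm
      · obtain ⟨σ, hσ0, hσ1⟩ := exists_perm_pair hne hik
        have hperm := TT_perm haarU B σ e0 e0 e1 e1
        rw [hσ0, hσ1] at hperm
        simp only [eq_self_iff_true, if_true, if_neg hik]
        linear_combination -hperm
    · by_cases h2 : i = l ∧ j = k
      · obtain ⟨hil, hjk⟩ := h2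
        rw [← hil, ← hjk]
        have hij : i ≠ j := by
          intro h
          exact h1 ⟨h, by rw [← hjk, ← hil, h]⟩
        obtain ⟨σ, hσ0, hσ1⟩ := exists_perm_pair hne hij
        have hperm := TT_perm haarU B σ e0 e1 e1 e0
        rw [hσ0, hσ1] at hperm
        simp only [eq_self_iff_true, if_true, if_neg hij,
          if_neg (show ¬ j = i from fun h => hij h.symm)]
        linear_combination -hperm
      · have hz := TT_vanish haarU B (show ¬_ from fun h => h.elim h1 h2)
        rw [hz]
        rcases not_and_or.mp h1 with h | h <;> rcases not_and_or.mp h2 with h' | h' <;>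
          simp [h, h']
  -- sum evaluation
  have hsum : (∑ x : Fin N × Fin N, ∑ y : Fin N × Fin N,
        (fun z : Fin N × Fin N => A z.1 z.2) x * (fun z : Fin N × Fin N => A z.1 z.2) y *
          TT haarU B ((fun z : Fin N × Fin N => z.2) x) ((fun z : Fin N × Fin N => z.1) x)
            ((fun z : Fin N × Fin N => z.2) y) ((fun z : Fin N × Fin N => z.1) y))
      = TT haarU B e0 e1 e1 e0 * (A * A).trace := by
    have hform : ∀ x y : Fin N × Fin N,
        A x.1 x.2 * A y.1 y.2 * TT haarU B x.2 x.1 y.2 y.1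
          = TT haarU B e0 e1 e1 e0 *
              (A x.1 x.2 * (A y.1 y.2 *
                ((if x.2 = y.1 then (1:ℂ) else 0) * (if x.1 = y.2 then (1:ℂ) else 0))))
            + TT haarU B e0 e0 e1 e1 *
              ((A x.1 x.2 * (if x.2 = x.1 then (1:ℂ) else 0)) *
               (A y.1 y.2 * (if y.2 = y.1 then (1:ℂ) else 0))) := by
      intro x y
      rw [hTTf x.2 x.1 y.2 y.1]
      ring
    simp only
    simp_rw [hform]
    have hinner : ∀ x : Fin N × Fin N,
        (∑ y : Fin N × Fin N,
          (TT haarU B e0 e1 e1 e0 *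
              (A x.1 x.2 * (A y.1 y.2 *
                ((if x.2 = y.1 then (1:ℂ) else 0) * (if x.1 = y.2 then (1:ℂ) else 0))))
            + TT haarU B e0 e0 e1 e1 *
              ((A x.1 x.2 * (if x.2 = x.1 then (1:ℂ) else 0)) *
               (A y.1 y.2 * (if y.2 = y.1 then (1:ℂ) else 0)))))
          = TT haarU B e0 e1 e1 e0 * (A x.1 x.2 * A x.2 x.1) := by
      intro x
      rw [Finset.sum_add_distrib, ← Finset.mul_sum, ← Finset.mul_sum, ← Finset.mul_sum,
        ← Finset.mul_sum, kron_sum A x.2 x.1, diag_sum A, hA]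
      ring
    rw [Finset.sum_congr rfl (fun x _ => hinner x), ← Finset.mul_sum, trA2_sum A]
  -- final computation
  have hpt1 : ∀ U : UG N,
      (K2exp N (A + conjU U B) - K2exp N A - K2exp N B) ^ 2
        = (2 * (N:ℂ) / ((N:ℂ)^2 - 1))^2 *
            ((∑ x : Fin N × Fin N, A x.1 x.2 * conjU U B x.2 x.1) *
             (∑ x : Fin N × Fin N, A x.1 x.2 * conjU U B x.2 x.1)) := by
    intro U
    have htr : (A * conjU U B).trace
        = ∑ x : Fin N × Fin N, A x.1 x.2 * conjU U B x.2 x.1 := by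
      rw [Fintype.sum_prod_type]
      simp [Matrix.trace, Matrix.diag, Matrix.mul_apply]
    rw [defect_eq hden A B hA hB U, htr]
    ring
  rw [integral_congr_ae (Filter.Eventually.of_forall hpt1),
    MeasureTheory.integral_const_mul,
    integral_sq_sum haarU B (fun z : Fin N × Fin N => A z.1 z.2)
      (fun z : Fin N × Fin N => z.2) (fun z : Fin N × Fin N => z.1),
    hsum]
  have hq' : TT haarU B e0 e1 e1 e0 = (B * B).trace / ((N:ℂ)^2 - 1) := by
    rw [eq_div_iff hden]
    linear_combination hqq
  rw [hq', pow_two A, pow_two B]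
  field_simp
  ring
end
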